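/- arXiv:2510.24032 — 8 statements merged into one kernel-verified Lean document; each statement's English description precedes it below -/
import Mathlib

section
/- Let S be a commutative Noetherian ring, φ : S → S an injective ring homomorphism, M a nonzero finitely generated S-module, and η : M → M an additive bijection such that η(s·x) = φ(s)·η(x) for all s ∈ S and x ∈ M. Then there exists an integer m > 0 such that (φ^m)^{-1}(Q) = Q for every associated prime ideal Q of M over S. -/
/-- The `m`-th iterate of a ring endomorphism. -/
def iterateRingHom {S : Type*} [CommRing S] (φ : S →+* S) : ℕ → (S →+* S)
  | 0 => RingHom.id S
  | m + 1 => (iterateRingHom φ m).comp φ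

section Aux

variable {S : Type*} [CommRing S] {M : Type*} [AddCommGroup M] [Module S M]

private lemma mem_inf_id' {u : Finset (Ideal S)} {x : S} : x ∈ u.inf id ↔ ∀ i ∈ u, x ∈ i :=
  Submodule.mem_finsetInf

private lemma colon_isPrimary' {J : Ideal S} (hJ : J.IsPrimary) {c : S} (hc : c ∉ J) :
    (J.colon (Ideal.span {c})).IsPrimary ∧ (J.colon (Ideal.span {c})).radical = J.radical := by
  have hJle : J ≤ J.colon (Ideal.span {c}) := fun t ht =>
    Ideal.mem_colon_span_singleton.2 (J.mul_mem_right c ht)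
  have hle_rad : J.colon (Ideal.span {c}) ≤ J.radical := by
    intro t ht
    rw [Ideal.mem_colon_span_singleton] at ht
    rcases (Ideal.isPrimary_iff.1 hJ).2 (show c * t ∈ J by rwa [mul_comm]) with h | h
    · exact absurd h hc
    · exact h
  have hrad : (J.colon (Ideal.span {c})).radical = J.radical := by
    refine le_antisymm ?_ (Ideal.radical_mono hJle)
    calc (J.colon (Ideal.span {c})).radical ≤ J.radical.radical := Ideal.radical_mono hle_rad
    _ = J.radical := Ideal.radical_idem J
  refine ⟨Ideal.isPrimary_iff.2 ⟨?_, ?_⟩, hrad⟩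
  · intro h
    exact hc (by simpa using Ideal.mem_colon_span_singleton.1 (h ▸ Submodule.mem_top : (1:S) ∈ _))
  · intro a b hab
    rw [Ideal.mem_colon_span_singleton] at hab
    have h2 : (a * c) * b ∈ J := by
      have : a * b * c = a * c * b := by ring
      rwa [this] at hab
    rcases (Ideal.isPrimary_iff.1 hJ).2 h2 with h | h
    · exact Or.inl (Ideal.mem_colon_span_singleton.2 h)
    · exact Or.inr (hrad ▸ h)

private lemma radical_mem_associatedPrimes_of_decomp' [IsNoetherianRing S]
    [DecidableEq (Ideal S)] (y : M) {t : Finset (Ideal S)}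
    (hinf : t.inf id = (Submodule.span S {y}).annihilator)
    (hprim : ∀ ⦃J⦄, J ∈ t → J.IsPrimary)
    {J : Ideal S} (hJt : J ∈ t) (hirr : ¬ (t.erase J).inf id ≤ J) :
    J.radical ∈ associatedPrimes S M := by
  classical
  obtain ⟨c, hc_mem, hcJ⟩ := SetLike.not_le_iff_exists.1 hirr
  set K := J.colon (Ideal.span {c}) with hK
  obtain ⟨hKprim, hKrad⟩ := colon_isPrimary' (hprim hJt) hcJ
  set g := LinearMap.toSpanSingleton S M (c • y) with hg
  have hker : LinearMap.ker g = K := by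
    ext s
    rw [LinearMap.mem_ker, hg, LinearMap.toSpanSingleton_apply, smul_smul, hK,
      Ideal.mem_colon_span_singleton]
    constructor
    · intro h
      have h1 : s * c ∈ (Submodule.span S {y}).annihilator :=
        (Submodule.mem_annihilator_span_singleton y (s*c)).2 h
      rw [← hinf] at h1
      exact mem_inf_id'.1 h1 J hJt
    · intro h
      have h1 : s * c ∈ t.inf id := by
        rw [mem_inf_id']
        intro i hi
        by_cases hiJ : i = J
        · subst hiJ; exact h
        · have hci : c ∈ (i : Ideal S) :=
            mem_inf_id'.1 hc_mem i (Finset.mem_erase.2 ⟨hiJ, hi⟩)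
          exact Ideal.mul_mem_left _ s hci
      rw [hinf] at h1
      exact (Submodule.mem_annihilator_span_singleton y (s*c)).1 h1
  have h1 : J.radical ∈ associatedPrimes S (S ⧸ K) := by
    rw [associatedPrimes.eq_singleton_of_isPrimary hKprim, hKrad]
    rfl
  have e1 : (S ⧸ K) ≃ₗ[S] LinearMap.range g :=
    (Submodule.quotEquivOfEq K (LinearMap.ker g) hker.symm).trans g.quotKerEquivRange
  have h2 : IsAssociatedPrime J.radical (S ⧸ K) := h1
  exact h2.map_of_injective ((LinearMap.range g).subtype.comp e1.toLinearMap)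
    ((Submodule.injective_subtype _).comp e1.injective)

private lemma assoc_subset_union' (N : Submodule S M) :
    associatedPrimes S M ⊆ associatedPrimes S N ∪ associatedPrimes S (M ⧸ N) :=
  associatedPrimes.subset_union_of_exact N.injective_subtype (LinearMap.exact_subtype_mkQ N)

private lemma assoc_quot_prime' {p : Ideal S} (hp : p.IsPrime) :
    associatedPrimes S (S ⧸ p) ⊆ {p} := by
  rintro Q ⟨hQ, x, hx⟩
  obtain ⟨s, rfl⟩ := Submodule.Quotient.mk_surjective p x
  by_cases hs : s ∈ p
  · exfalso
    apply hQ.ne_top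
    rw [hx, Ideal.radical_eq_top, eq_top_iff]
    intro u _
    rw [Submodule.mem_colon_singleton, Submodule.mem_bot, ← Submodule.Quotient.mk_smul,
      Submodule.Quotient.mk_eq_zero, smul_eq_mul]
    exact p.mul_mem_left u hs
  · have : Q = p := by
      rw [hx]
      have hc : (⊥ : Submodule S (S ⧸ p)).colon {Submodule.Quotient.mk s} = p := by
        ext u
        rw [Submodule.mem_colon_singleton, Submodule.mem_bot, ← Submodule.Quotient.mk_smul,
          Submodule.Quotient.mk_eq_zero, smul_eq_mul]
        exact ⟨fun h => (hp.mem_or_mem h).resolve_right hs, fun h => p.mul_mem_right s h⟩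
      rw [hc, hp.radical]
    exact this ▸ rfl

private lemma assoc_span_singleton_subset' (x : M)
    (hp : ((Submodule.span S {x}).annihilator).IsPrime) :
    associatedPrimes S ↥(Submodule.span S {x}) ⊆ {(Submodule.span S {x}).annihilator} := by
  set g := LinearMap.toSpanSingleton S M x with hg
  have hker : LinearMap.ker g = (Submodule.span S {x}).annihilator := by
    ext s
    rw [LinearMap.mem_ker, hg, LinearMap.toSpanSingleton_apply,
      Submodule.mem_annihilator_span_singleton]
  have hrange : Submodule.span S {x} = LinearMap.range g :=
    (LinearMap.span_singleton_eq_range S M x).trans rfl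
  intro Q hQ
  have e1 : ↥(Submodule.span S {x}) ≃ₗ[S] (S ⧸ (Submodule.span S {x}).annihilator) :=
    (LinearEquiv.ofEq _ _ hrange).trans
      (g.quotKerEquivRange.symm.trans (Submodule.quotEquivOfEq _ _ hker))
  exact assoc_quot_prime' hp ((LinearEquiv.AssociatedPrimes.eq e1) ▸ hQ)

private lemma finite_associatedPrimes' [IsNoetherianRing S] [Module.Finite S M] :
    (associatedPrimes S M).Finite := by
  haveI hN : IsNoetherian S M := isNoetherian_of_isNoetherianRing_of_finite S M
  have key : ∀ N : Submodule S M, (associatedPrimes S (M ⧸ N)).Finite := by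
    intro N
    induction N using WellFounded.induction (r := (· > ·)) (IsNoetherian.wf hN) with
    | _ N IH =>
      by_cases hsub : Subsingleton (M ⧸ N)
      · rw [associatedPrimes.eq_empty_of_subsingleton]
        exact Set.finite_empty
      · haveI : Nontrivial (M ⧸ N) := not_subsingleton_iff_nontrivial.mp hsub
        obtain ⟨p, hp⟩ := associatedPrimes.nonempty S (M ⧸ N)
        obtain ⟨hpP, xb, hxb⟩ := isAssociatedPrime_iff.1 hp
        rw [Submodule.bot_colon'] at hxb
        have hxb0 : xb ≠ 0 := by
          rintro rfl
          apply hpP.ne_top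
          rw [hxb, Submodule.span_singleton_eq_bot.mpr rfl, Submodule.annihilator_bot]
        set N' := Submodule.comap N.mkQ (Submodule.span S {xb}) with hN'
        have hNN' : N < N' := by
          refine lt_of_le_of_ne (fun m hm => ?_) (fun heq => ?_)
          · have : N.mkQ m = 0 := (Submodule.Quotient.mk_eq_zero N).2 hm
            simp only [hN', Submodule.mem_comap, this]
            exact Submodule.zero_mem _
          · obtain ⟨u, hu⟩ := N.mkQ_surjective xb
            have hu' : u ∈ N' := by
              simp only [hN', Submodule.mem_comap, hu]
              exact Submodule.mem_span_singleton_self xb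
            rw [← heq] at hu'
            exact hxb0 (by rw [← hu]; exact (Submodule.Quotient.mk_eq_zero N).2 hu')
        have hmap : N'.map N.mkQ = Submodule.span S {xb} := by
          rw [hN', Submodule.map_comap_eq, Submodule.range_mkQ, top_inf_eq]
        have e2 : ((M ⧸ N) ⧸ (Submodule.span S {xb})) ≃ₗ[S] M ⧸ N' :=
          (Submodule.quotEquivOfEq _ _ hmap.symm).trans
            (Submodule.quotientQuotientEquivQuotient N N' hNN'.le)
        have hsp : (associatedPrimes S ↥(Submodule.span S {xb})).Finite := by
          refine Set.Finite.subset (Set.finite_singleton _) (assoc_span_singleton_subset' xb ?_)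
          rw [← hxb]; exact hpP
        have hq : (associatedPrimes S ((M ⧸ N) ⧸ (Submodule.span S {xb}))).Finite := by
          rw [LinearEquiv.AssociatedPrimes.eq e2]
          exact IH N' hNN'
        exact ((hsp.union hq).subset (assoc_subset_union' _))
  have e0 : (M ⧸ (⊥ : Submodule S M)) ≃ₗ[S] M := Submodule.quotEquivOfEqBot ⊥ rfl
  rw [← LinearEquiv.AssociatedPrimes.eq e0]
  exact key ⊥

end Aux

/-- Let `S` be a commutative Noetherian ring, `φ : S → S` an injective ring homomorphism,
`M` a nonzero finitely generated `S`-module, and `η : M → M` a `φ`-twisted isomorphism.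
Then there is an integer `m > 0` with `(φ^m)⁻¹(Q) = Q` for every associated prime `Q` of `M`. -/
theorem exists_iterate_comap_associatedPrimes_eq
    (S : Type*) [CommRing S] [IsNoetherianRing S]
    (φ : S →+* S) (hφ : Function.Injective φ)
    (M : Type*) [AddCommGroup M] [Module S M] [Module.Finite S M] [Nontrivial M]
    (η : M ≃+ M)
    (hη : ∀ (s : S) (x : M), η (s • x) = φ s • η x) :
    ∃ m : ℕ, 0 < m ∧ ∀ Q ∈ associatedPrimes S M, Q.comap (iterateRingHom φ m) = Q := by
  classical
  have hfin : (associatedPrimes S M).Finite := finite_associatedPrimes'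
  have hmapsto : ∀ Q ∈ associatedPrimes S M, Q.comap φ ∈ associatedPrimes S M := by
    rintro Q hQ'
    obtain ⟨hQ, x, hx⟩ := isAssociatedPrime_iff.1 hQ'
    rw [Submodule.bot_colon'] at hx
    refine (isAssociatedPrime_iff (M := M)).2 ⟨hQ.comap φ, η.symm x, ?_⟩
    rw [Submodule.bot_colon']
    ext s
    have key : η (s • η.symm x) = φ s • x := by
      rw [hη s (η.symm x), η.apply_symm_apply]
    rw [Ideal.mem_comap, hx, Submodule.mem_annihilator_span_singleton,
      Submodule.mem_annihilator_span_singleton]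
    constructor
    · intro h
      apply η.injective
      rw [key, h, map_zero]
    · intro h
      rw [← key, h, map_zero]
  have hsurj : ∀ Q ∈ associatedPrimes S M, ∃ P ∈ associatedPrimes S M, P.comap φ = Q := by
    rintro Q hQ'
    obtain ⟨hQ, x, hx⟩ := isAssociatedPrime_iff.1 hQ'
    rw [Submodule.bot_colon'] at hx
    set y := η x with hy
    set I := (Submodule.span S {y}).annihilator with hI
    have hcomap : I.comap φ = Q := by
      ext s
      have key : η (s • x) = φ s • y := hη s x
      rw [Ideal.mem_comap, hI, Submodule.mem_annihilator_span_singleton, hx,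
        Submodule.mem_annihilator_span_singleton]
      constructor
      · intro h
        apply η.injective
        rw [key, h, map_zero]
      · intro h
        rw [← key, h, map_zero]
    obtain ⟨t, hinf, hprim, -, hirr⟩ := Submodule.IsLasker.exists_isMinimalPrimaryDecomposition (Submodule.isLasker S S) I
    have hinfc : t.inf (fun (J : Ideal S) => J.comap φ) ≤ Q := by
      intro s hs
      have h1 : φ s ∈ t.inf id := by
        rw [mem_inf_id']
        intro i hi
        exact (Finset.inf_le hi : t.inf (fun (J : Ideal S) => J.comap φ) ≤ Ideal.comap φ i) hs
      rw [hinf] at h1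
      rw [← hcomap]
      exact h1
    obtain ⟨J, hJt, hJle⟩ := (hQ.inf_le').1 hinfc
    have hIJ : I ≤ J := by rw [← hinf]; exact Finset.inf_le hJt
    refine ⟨Ideal.radical J, radical_mem_associatedPrimes_of_decomp' y hinf hprim hJt (hirr hJt), ?_⟩
    apply le_antisymm
    · intro s hs
      rw [Ideal.mem_comap] at hs
      obtain ⟨n, hn⟩ := hs
      have hsn : s ^ n ∈ Ideal.comap φ J := by rw [Ideal.mem_comap, map_pow]; exact hn
      exact hQ.mem_of_pow_mem n (hJle hsn)
    · rw [← hcomap]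
      exact Ideal.comap_mono (hIJ.trans (Ideal.le_radical (I := J)))
  haveI : Finite ↥(associatedPrimes S M) := hfin.to_subtype
  let F : ↥(associatedPrimes S M) → ↥(associatedPrimes S M) :=
    fun Q => ⟨Q.1.comap φ, hmapsto Q.1 Q.2⟩
  have hFsurj : Function.Surjective F := by
    rintro ⟨Q, hQ⟩
    obtain ⟨P, hP, hPQ⟩ := hsurj Q hQ
    exact ⟨⟨P, hP⟩, Subtype.ext hPQ⟩
  have hFinj : Function.Injective F := (Finite.injective_iff_surjective).2 hFsurj
  obtain ⟨a, b, hab, he⟩ := Finite.exists_ne_map_eq_of_infinite (fun n : ℕ => F^[n])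
  wlog hlt : a < b generalizing a b
  · exact this b a hab.symm he.symm ((hab.lt_or_gt).resolve_left hlt)
  set m := b - a with hm
  have hmpos : 0 < m := Nat.sub_pos_of_lt hlt
  have hFm : ∀ Q, F^[m] Q = Q := by
    intro Q
    have hinj : Function.Injective F^[a] := Function.Injective.iterate hFinj a
    apply hinj
    have : F^[a + m] Q = F^[a] (F^[m] Q) := Function.iterate_add_apply F a m Q
    rw [← this, hm, Nat.add_sub_cancel' hlt.le, ← congrFun he Q]
  have hiter : ∀ (k : ℕ) (Q : ↥(associatedPrimes S M)),
      ((F^[k] Q : ↥(associatedPrimes S M)) : Ideal S) = Ideal.comap (iterateRingHom φ k) Q.1 := by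
    intro k
    induction k with
    | zero =>
      intro Q
      simp only [Function.iterate_zero, id_eq, iterateRingHom]
      exact (Ideal.comap_id Q.1).symm
    | succ k ih =>
      intro Q
      rw [Function.iterate_succ_apply']
      show ((F^[k] Q).1).comap φ = _
      rw [ih Q, Ideal.comap_comap]
      rfl
  refine ⟨m, hmpos, fun Q hQ => ?_⟩
  have h1 := hiter m ⟨Q, hQ⟩
  rw [hFm ⟨Q, hQ⟩] at h1
  exact h1.symm
end

section
/- Let K be a field and S' a commutative K-algebra that is finitely generated as a K-algebra, with the structure map K → S' injective. Let M' be a nonzero finitely generated S'-module. Then M' is finite-dimensional as a K-vector space if and only if every associated prime ideal of M' over S' is a maximal ideal of S'. -/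
/-- If `M` is a finite module over `S'` killed by an ideal `J` such that `S'/J` is
finite-dimensional over `K`, then `M` is finite-dimensional over `K`. -/
lemma aux_fin_of_torsion (K S' : Type*) [Field K] [CommRing S'] [Algebra K S']
    (M : Type*) [AddCommGroup M] [Module K M] [Module S' M] [IsScalarTower K S' M]
    [Module.Finite S' M] (J : Ideal S') (hJ : J ≤ Module.annihilator S' M)
    (hfin : FiniteDimensional K (S' ⧸ J)) : FiniteDimensional K M := by
  have htor : Module.IsTorsionBySet S' M J := fun x r =>
    Module.mem_annihilator.mp (hJ r.2) x
  letI := htor.module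
  haveI : IsScalarTower K (S' ⧸ J) M := htor.isScalarTower
  haveI : IsScalarTower S' (S' ⧸ J) M := htor.isScalarTower
  haveI : Module.Finite (S' ⧸ J) M := Module.Finite.of_restrictScalars_finite S' (S' ⧸ J) M
  exact Module.Finite.trans (S' ⧸ J) M

lemma aux_forward (K S' : Type*) [Field K] [CommRing S'] [Algebra K S']
    (M' : Type*) [AddCommGroup M'] [Module K M'] [Module S' M']
    [IsScalarTower K S' M'] [FiniteDimensional K M'] [IsNoetherianRing S']
    {Q : Ideal S'} (hQ : Q ∈ associatedPrimes S' M') : Q.IsMaximal := by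
  obtain ⟨hQp, x, hx⟩ := isAssociatedPrime_iff.mp hQ
  rw [Submodule.bot_colon'] at hx
  haveI := hQp
  -- the map `S'/Q → M'`, `s ↦ s • x`, is injective
  have hle : Q ≤ LinearMap.ker (LinearMap.toSpanSingleton S' M' x) := by
    intro a ha
    simpa [LinearMap.mem_ker, LinearMap.toSpanSingleton_apply] using
      (Submodule.mem_annihilator_span_singleton x a).mp (hx ▸ ha)
  set f : (S' ⧸ Q) →ₗ[S'] M' := Q.liftQ (LinearMap.toSpanSingleton S' M' x) hle
  have hinj : Function.Injective f := by
    rw [← LinearMap.ker_eq_bot]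
    apply Submodule.ker_liftQ_eq_bot
    intro a ha
    rw [LinearMap.mem_ker, LinearMap.toSpanSingleton_apply] at ha
    exact hx ▸ (Submodule.mem_annihilator_span_singleton x a).mpr ha
  haveI : FiniteDimensional K (S' ⧸ Q) :=
    FiniteDimensional.of_injective (f.restrictScalars K) hinj
  haveI : Algebra.IsIntegral K (S' ⧸ Q) := Algebra.IsIntegral.of_finite K _
  exact Ideal.Quotient.maximal_of_isField Q
    (isField_of_isIntegral_of_isField' (Semifield.toIsField K))

lemma aux_minimal_mem_associated
    {S' : Type*} [CommRing S'] [IsNoetherianRing S']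
    {M : Type*} [AddCommGroup M] [Module S' M] [Module.Finite S' M]
    {p : Ideal S'} (hp : p ∈ (Module.annihilator S' M).minimalPrimes) :
    p ∈ associatedPrimes S' M := by
  obtain ⟨⟨hprime, hann⟩, hmin⟩ := hp
  haveI := hprime
  -- the submodule of elements killed by something outside `p`
  set N : Submodule S' M :=
    { carrier := {x | ∃ s, s ∉ p ∧ s • x = 0}
      add_mem' := by
        rintro x y ⟨s, hs, hsx⟩ ⟨t, ht, hty⟩
        refine ⟨s * t, fun h => (hprime.mem_or_mem h).elim hs ht, ?_⟩
        have h1 : (s * t) • x = 0 := by rw [mul_comm, mul_smul, hsx, smul_zero]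
        have h2 : (s * t) • y = 0 := by rw [mul_smul, hty, smul_zero]
        rw [smul_add, h1, h2, add_zero]
      zero_mem' := ⟨1, hprime.ne_top ∘ (Ideal.eq_top_iff_one p).mpr, smul_zero 1⟩
      smul_mem' := by
        rintro r x ⟨s, hs, hsx⟩
        exact ⟨s, hs, by rw [smul_comm, hsx, smul_zero]⟩ } with hNdef
  have memN : ∀ x : M, x ∈ N ↔ ∃ s, s ∉ p ∧ s • x = 0 := fun x => Iff.rfl
  -- N ≠ ⊤
  have hNne : N ≠ ⊤ := by
    intro h
    obtain ⟨T, hT⟩ := Module.Finite.fg_top (R := S') (M := M)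
    choose sel hsel1 hsel2 using fun m : M => (memN m).mp (h ▸ Submodule.mem_top (x := m))
    set s : S' := ∏ m ∈ T, sel m with hs
    have hsp : s ∉ p := by
      intro hsp
      rw [hs] at hsp
      obtain ⟨m, _, hm⟩ := Ideal.IsPrime.prod_mem_iff.mp hsp
      exact hsel1 m hm
    have : s ∈ Module.annihilator S' M := by
      rw [Module.mem_annihilator]
      intro m
      have hgen : ∀ m ∈ (T : Set M), s • m = 0 := by
        intro m hm
        obtain ⟨c, hc⟩ := Finset.dvd_prod_of_mem sel hm
        rw [hs, hc, mul_comm, mul_smul, hsel2 m, smul_zero]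
      have hTspan : m ∈ Submodule.span S' (T : Set M) := hT ▸ Submodule.mem_top
      induction hTspan using Submodule.span_induction with
      | mem x hx => exact hgen x hx
      | zero => exact smul_zero s
      | add x y _ _ hx hy => rw [smul_add, hx, hy, add_zero]
      | smul r x _ hx => rw [smul_comm, hx, smul_zero]
    exact hsp (hann this)
  haveI : Nontrivial (M ⧸ N) := Submodule.Quotient.nontrivial_iff.mpr hNne
  obtain ⟨q, hq⟩ := associatedPrimes.nonempty S' (M ⧸ N)
  obtain ⟨hqprime, y, hy⟩ := isAssociatedPrime_iff.mp hq
  rw [Submodule.bot_colon'] at hy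
  obtain ⟨x, rfl⟩ := Submodule.Quotient.mk_surjective N y
  have hxN : x ∉ N := by
    intro h
    rw [(Submodule.Quotient.mk_eq_zero N).mpr h, Submodule.span_zero_singleton,
      Submodule.annihilator_bot] at hy
    exact hqprime.ne_top hy
  -- q ≤ p
  have hqp : q ≤ p := by
    intro a ha
    by_contra hap
    have h0 : a • Submodule.Quotient.mk (p := N) x = 0 :=
      (Submodule.mem_annihilator_span_singleton _ a).mp (hy ▸ ha)
    rw [← Submodule.Quotient.mk_smul, Submodule.Quotient.mk_eq_zero] at h0
    obtain ⟨t, htp, hta⟩ := (memN _).mp h0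
    exact hxN ((memN x).mpr ⟨t * a, fun h => (hprime.mem_or_mem h).elim htp hap,
      by rw [mul_smul, hta]⟩)
  -- Ann M ≤ q
  have hannq : Module.annihilator S' M ≤ q := by
    intro a ha
    rw [hy, Submodule.mem_annihilator_span_singleton, ← Submodule.Quotient.mk_smul,
      Module.mem_annihilator.mp ha, Submodule.Quotient.mk_zero]
  -- hence q = p
  have hqeq : q = p := le_antisymm hqp (hmin ⟨hqprime, hannq⟩ hqp)
  -- clear denominators
  obtain ⟨T, hT⟩ : p.FG := IsNoetherian.noetherian p
  have hmem : ∀ a ∈ T, ∃ t, t ∉ p ∧ t • (a • x) = 0 := by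
    intro a ha
    have hap : a ∈ q := hqeq ▸ (hT ▸ Ideal.subset_span ha)
    have h0 : a • Submodule.Quotient.mk (p := N) x = 0 :=
      (Submodule.mem_annihilator_span_singleton _ a).mp (hy ▸ hap)
    rw [← Submodule.Quotient.mk_smul, Submodule.Quotient.mk_eq_zero] at h0
    exact (memN _).mp h0
  choose sel hsel1 hsel2 using hmem
  classical
  set t : S' := ∏ a ∈ T.attach, sel a.1 a.2 with ht
  have htp : t ∉ p := by
    intro h
    rw [ht] at h
    obtain ⟨a, _, ha⟩ := Ideal.IsPrime.prod_mem_iff.mp h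
    exact hsel1 a.1 a.2 ha
  refine isAssociatedPrime_iff.mpr ⟨hprime, t • x, ?_⟩
  rw [Submodule.bot_colon']
  apply le_antisymm
  · rw [← hT, Ideal.span_le]
    intro a ha
    have ha' : a ∈ T := ha
    rw [SetLike.mem_coe, Submodule.mem_annihilator_span_singleton]
    obtain ⟨c, hc⟩ := Finset.dvd_prod_of_mem (fun b : {z // z ∈ T} => sel b.1 b.2)
      (Finset.mem_attach T ⟨a, ha'⟩)
    rw [smul_smul, mul_comm a t, ht, hc, mul_assoc, mul_smul, mul_smul,
      smul_comm (sel a ha') c, hsel2 a ha', smul_zero]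
  · intro s hs
    rw [Submodule.mem_annihilator_span_singleton, smul_smul] at hs
    have hst : s * t ∈ q := by
      rw [hy, Submodule.mem_annihilator_span_singleton, ← Submodule.Quotient.mk_smul, hs,
        Submodule.Quotient.mk_zero]
    exact (hprime.mem_or_mem (hqeq ▸ hst)).resolve_right htp

universe u

lemma aux_pow (K : Type*) [Field K] (S' : Type*) [CommRing S'] [Algebra K S']
    [IsNoetherianRing S'] (J : Ideal S') (hq : FiniteDimensional K (S' ⧸ J)) :
    ∀ (n : ℕ) (M : Type u) [AddCommGroup M] [Module K M] [Module S' M]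
      [IsScalarTower K S' M] [Module.Finite S' M],
      J ^ n ≤ Module.annihilator S' M → FiniteDimensional K M := by
  intro n
  induction n with
  | zero =>
    intro M _ _ _ _ _ h
    have h1 : (1 : S') ∈ Module.annihilator S' M := by
      apply h; rw [pow_zero, Ideal.one_eq_top]; trivial
    haveI : Subsingleton M := subsingleton_of_forall_eq 0 fun x => by
      have := Module.mem_annihilator.mp h1 x
      rwa [one_smul] at this
    infer_instance
  | succ n IH =>
    intro M _ _ _ _ _ h
    set N : Submodule S' M := J • ⊤ with hNdef
    haveI : IsNoetherian S' M := isNoetherian_of_isNoetherianRing_of_finite S' M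
    haveI : Module.Finite S' ↥N := Module.Finite.iff_fg.mpr (IsNoetherian.noetherian N)
    have hN : J ^ n ≤ Module.annihilator S' ↥N := by
      intro a ha
      rw [Module.mem_annihilator]
      rintro ⟨x, hx⟩
      rw [Subtype.ext_iff]
      show a • x = (0 : M)
      refine Submodule.smul_induction_on hx ?_ ?_
      · intro r hr m _
        rw [smul_smul]
        have : a * r ∈ J ^ (n + 1) := by
          rw [pow_succ]; exact Ideal.mul_mem_mul ha hr
        exact Module.mem_annihilator.mp (h this) m
      · intro x y hx hy
        rw [smul_add, hx, hy, add_zero]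
    haveI hfinN : FiniteDimensional K ↥N := IH ↥N hN
    haveI hfinQ : FiniteDimensional K (M ⧸ N) := by
      refine aux_fin_of_torsion K S' (M ⧸ N) J ?_ hq
      intro a ha
      rw [Module.mem_annihilator]
      intro m
      obtain ⟨x, rfl⟩ := Submodule.Quotient.mk_surjective N m
      rw [← Submodule.Quotient.mk_smul, Submodule.Quotient.mk_eq_zero]
      exact Submodule.smul_mem_smul ha trivial
    have e1 : ↥(Submodule.restrictScalars K N) ≃ₗ[K] ↥N :=
      (Submodule.restrictScalarsEquiv K S' M N).restrictScalars K
    have e2 : (M ⧸ Submodule.restrictScalars K N) ≃ₗ[K] M ⧸ N :=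
      Submodule.Quotient.restrictScalarsEquiv K N
    rw [show FiniteDimensional K M = Module.Finite K M from rfl, ← IsNoetherian.iff_fg,
      isNoetherian_iff_submodule_quotient (Submodule.restrictScalars K N)]
    constructor
    · exact isNoetherian_of_linearEquiv e1.symm
    · exact isNoetherian_of_linearEquiv e2.symm

lemma aux_fd_quot_sInf (K S' : Type*) [Field K] [CommRing S'] [Algebra K S']
    (hft : Algebra.FiniteType K S') {P : Set (Ideal S')} (hfin : P.Finite)
    (hmax : ∀ p ∈ P, p.IsMaximal) : FiniteDimensional K (S' ⧸ sInf P) := by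
  classical
  haveI : ∀ p : hfin.toFinset, FiniteDimensional K (S' ⧸ (p.1 : Ideal S')) := by
    rintro ⟨p, hp⟩
    have hpP : p ∈ P := hfin.mem_toFinset.mp hp
    haveI := hmax p hpP
    haveI : Algebra.FiniteType K (S' ⧸ p) :=
      hft.of_surjective (Ideal.Quotient.mkₐ K p)
        (Ideal.Quotient.mkₐ_surjective K p)
    letI := Ideal.Quotient.field p
    exact finite_of_finite_type_of_isJacobsonRing K (S' ⧸ p)
  set g : S' →ₗ[K] ∀ p : hfin.toFinset, S' ⧸ (p.1 : Ideal S') :=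
    LinearMap.pi fun p => (Ideal.Quotient.mkₐ K p.1).toLinearMap with hg
  have hle : Submodule.restrictScalars K (sInf P) ≤ LinearMap.ker g := by
    intro a ha
    rw [LinearMap.mem_ker]
    funext p
    have : a ∈ (p.1 : Ideal S') :=
      (Submodule.mem_sInf.mp ha) p.1 (hfin.mem_toFinset.mp p.2)
    simpa [hg] using Ideal.Quotient.eq_zero_iff_mem.mpr this
  set f := (Submodule.restrictScalars K (sInf P)).liftQ g hle with hf
  have hinj : Function.Injective f := by
    rw [← LinearMap.ker_eq_bot]
    apply Submodule.ker_liftQ_eq_bot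
    intro a ha
    rw [LinearMap.mem_ker] at ha
    rw [Submodule.restrictScalars_mem, Submodule.mem_sInf]
    intro p hp
    have := congrFun ha ⟨p, hfin.mem_toFinset.mpr hp⟩
    simpa [hg, Ideal.Quotient.eq_zero_iff_mem] using this
  haveI : FiniteDimensional K (S' ⧸ Submodule.restrictScalars K (sInf P)) :=
    FiniteDimensional.of_injective f hinj
  exact Module.Finite.equiv (Submodule.Quotient.restrictScalarsEquiv K (sInf P))


/-- Let `K` be a field and `S'` a finitely generated commutative `K`-algebra with injective
structure map, and let `M'` be a nonzero finitely generated `S'`-module. Then `M'` is finite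
dimensional over `K` iff every associated prime of `M'` over `S'` is a maximal ideal. -/
theorem finiteDimensional_iff_associatedPrimes_isMaximal
    (K : Type*) [Field K] (S' : Type*) [CommRing S'] [Algebra K S']
    (hft : Algebra.FiniteType K S')
    (hinj : Function.Injective (algebraMap K S'))
    (M' : Type*) [AddCommGroup M'] [Module K M'] [Module S' M']
    [IsScalarTower K S' M'] [Module.Finite S' M'] [Nontrivial M'] :
    FiniteDimensional K M' ↔ ∀ Q ∈ associatedPrimes S' M', Q.IsMaximal := by
  haveI := hft
  haveI : IsNoetherianRing S' := Algebra.FiniteType.isNoetherianRing K S'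
  constructor
  · intro hfd Q hQ
    exact aux_forward K S' M' hQ
  · intro hmax
    set I := Module.annihilator S' M' with hI
    have hJfg : I.radical.FG := IsNoetherian.noetherian _
    obtain ⟨n, hn⟩ := Ideal.exists_radical_pow_le_of_fg I hJfg
    have hminfin : I.minimalPrimes.Finite := by
      rw [Ideal.minimalPrimes_eq_comap]
      exact (minimalPrimes.finite_of_isNoetherianRing (S' ⧸ I)).image _
    have hminmax : ∀ p ∈ I.minimalPrimes, p.IsMaximal := fun p hp =>
      hmax p (aux_minimal_mem_associated hp)
    have hfd : FiniteDimensional K (S' ⧸ I.radical) := by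
      rw [← Ideal.sInf_minimalPrimes]
      exact aux_fd_quot_sInf K S' hft hminfin hminmax
    exact aux_pow K S' I.radical hfd n M' hn
end

section
/- Let H be a finitely generated nontrivial abelian group, and let H₁ ≥ H₂ ≥ ⋯ ≥ H_k ≥ ⋯ be a descending sequence of subgroups of H such that ⋂_{k=1}^∞ H_k = 0 and each H_k is isomorphic to H. Then H is isomorphic to ℤⁿ for some integer n > 0, i.e., H is free abelian of positive finite rank. -/
/-- Let `H` be a finitely generated nontrivial abelian group and
`H₁ ≥ H₂ ≥ ⋯` a descending sequence of subgroups of `H` with `⋂ₖ Hₖ = 0` and each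
`Hₖ ≅ H`. Then `H ≅ ℤⁿ` for some `n > 0`. -/
theorem free_abelian_of_descending_isomorphic_subgroups
    (H : Type*) [AddCommGroup H] [AddGroup.FG H] [Nontrivial H]
    (f : ℕ → AddSubgroup H)
    (hdesc : ∀ k, f (k + 1) ≤ f k)
    (hinter : (⨅ k : ℕ, f k) = ⊥)
    (hiso : ∀ k, Nonempty ((f k) ≃+ H)) :
    ∃ n : ℕ, 0 < n ∧ Nonempty (H ≃+ (Fin n → ℤ)) := by
  classical
  have hfin : Module.Finite ℤ H := Module.Finite.iff_addGroup_fg.mpr ‹AddGroup.FG H›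
  set T : AddSubgroup H := AddCommGroup.torsion H with hT
  have hTS : (Submodule.torsion ℤ H).toAddSubgroup = T := Submodule.torsion_int
  have hTfin : Finite T := by
    have h1 : Finite (Submodule.torsion ℤ H) :=
      Module.finite_of_fg_torsion _ (Submodule.torsion_isTorsion (R := ℤ))
    rw [← hTS]
    exact h1
  -- key: T ≤ f k for each k
  have hkey : ∀ k, T ≤ f k := by
    intro k
    obtain ⟨e⟩ := hiso k
    -- injective map from T into T ⊓ f k
    set φ : T → T := fun t =>
      ⟨((e.symm t.1 : f k) : H), by
        have ht : IsOfFinAddOrder (t.1 : H) := t.2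
        have h1 : IsOfFinAddOrder (e.symm t.1) := e.symm.toAddMonoidHom.isOfFinAddOrder ht
        exact (f k).subtype.isOfFinAddOrder h1⟩ with hφ
    have hmem : ∀ t : T, ((φ t : H)) ∈ f k := fun t => ((e.symm t.1 : f k)).2
    have hinj : Function.Injective φ := by
      intro a b hab
      have h0 : (φ a : H) = (φ b : H) := Subtype.ext_iff.mp hab
      have h1 : ((e.symm a.1 : f k) : H) = ((e.symm b.1 : f k) : H) := h0
      exact Subtype.ext (e.symm.injective (Subtype.ext h1))
    have hsurj : Function.Surjective φ := Finite.injective_iff_surjective.mp hinj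
    intro x hx
    obtain ⟨t, ht⟩ := hsurj ⟨x, hx⟩
    have : ((φ t : H)) = x := congrArg Subtype.val ht
    exact this ▸ hmem t
  have hTbot : T = ⊥ := le_bot_iff.mp (hinter ▸ le_iInf hkey)
  have htors : Submodule.torsion ℤ H = ⊥ := by
    rw [Submodule.eq_bot_iff]
    intro x hx
    have hx' : x ∈ T := by rw [← hTS]; exact hx
    rw [hTbot] at hx'
    simpa using hx'
  have : Module.IsTorsionFree ℤ H :=
    (Submodule.isTorsionFree_iff_torsion_eq_bot).mpr htors
  have hfree : Module.Free ℤ H := Module.free_of_finite_type_torsion_free'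
  let b := Module.Free.chooseBasis ℤ H
  set ι := Module.Free.ChooseBasisIndex ℤ H
  let eq1 : H ≃ₗ[ℤ] (ι → ℤ) := b.equivFun
  let eq2 : (ι → ℤ) ≃+ (Fin (Fintype.card ι) → ℤ) :=
    AddEquiv.arrowCongr (Fintype.equivFin ι) (AddEquiv.refl ℤ)
  refine ⟨Fintype.card ι, ?_, ⟨eq1.toAddEquiv.trans eq2⟩⟩
  rcases Nat.eq_zero_or_pos (Fintype.card ι) with h0 | h
  · exfalso
    have : IsEmpty ι := Fintype.card_eq_zero_iff.mp h0
    have : Subsingleton (ι → ℤ) := inferInstance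
    have : Subsingleton H := eq1.toEquiv.subsingleton
    exact not_subsingleton H this
  · exact h
end

section
/- Let A be an n×n integer matrix. Then ⋂_{k=1}^∞ im A^k = 0 if and only if every complex eigenvalue α of A (i.e., every root in ℂ of the characteristic polynomial of A) satisfies: either α = 0, or α^{-1} is not integral over ℤ (that is, α^{-1} is not an algebraic integer). -/
set_option maxHeartbeats 1600000

open Polynomial Matrix

variable {ι : Type*} [Fintype ι] [DecidableEq ι]

lemma eval_charpoly' {R : Type*} [CommRing R] (M : Matrix ι ι R) (x : R) :
    (M.charpoly).eval x = (x • (1 : Matrix ι ι R) - M).det := by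
  rw [Matrix.charpoly, eval_det, Matrix.matPolyEquiv_charmatrix]
  rw [eval_sub, eval_X, eval_C]
  congr 1
  ext i j
  by_cases h : i = j <;> simp [Matrix.scalar_apply, Matrix.one_apply, Matrix.diagonal, h]

lemma charpoly_eval_eq_zero_iff {K : Type*} [Field K] (M : Matrix ι ι K) (x : K) :
    (M.charpoly).eval x = 0 ↔ ∃ w ≠ 0, M *ᵥ w = x • w := by
  rw [eval_charpoly', ← Matrix.exists_mulVec_eq_zero_iff]
  apply exists_congr; intro w
  apply and_congr_right'
  rw [Matrix.sub_mulVec, Matrix.smul_mulVec, Matrix.one_mulVec, sub_eq_zero, eq_comm]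

lemma aeval_mulVec {K : Type*} [CommRing K] (M : Matrix ι ι K) {w : ι → K} {x : K}
    (hw : M *ᵥ w = x • w) (p : Polynomial ℤ) :
    (Polynomial.aeval M p) *ᵥ w = (Polynomial.aeval x p) • w := by
  have hpow : ∀ k : ℕ, (M ^ k) *ᵥ w = (x ^ k) • w := by
    intro k; induction k with
    | zero => simp
    | succ k ih =>
        rw [pow_succ', pow_succ', ← Matrix.mulVec_mulVec, ih, Matrix.mulVec_smul, hw, smul_smul,
          mul_comm]
  induction p using Polynomial.induction_on' with
  | add p q hp hq => rw [map_add, map_add, Matrix.add_mulVec, hp, hq, add_smul]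
  | monomial k a =>
      rw [Polynomial.aeval_monomial, Polynomial.aeval_monomial]
      rw [Algebra.algebraMap_eq_smul_one, Algebra.algebraMap_eq_smul_one, smul_mul_assoc, one_mul,
        smul_mul_assoc, one_mul, Matrix.smul_mulVec, hpow, smul_assoc]

lemma map_aeval_matrix {n : ℕ} (A : Matrix (Fin n) (Fin n) ℤ) (p : Polynomial ℤ) :
    (Polynomial.aeval A p).map (Int.cast : ℤ → ℂ) =
      Polynomial.aeval (A.map (Int.cast : ℤ → ℂ)) p := by
  have key : (Int.castRingHom ℂ).mapMatrix (Polynomial.aeval A p) =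
      Polynomial.aeval ((Int.castRingHom ℂ).mapMatrix A) p := by
    rw [Polynomial.aeval_def, Polynomial.aeval_def, Polynomial.hom_eval₂]
    congr 1
    exact Subsingleton.elim _ _
  simpa [RingHom.mapMatrix_apply] using key

lemma isIntegral_inv_of_unit_coeff_zero {p : Polynomial ℤ} (hu : IsUnit (p.coeff 0))
    {β : ℂ} (hβ : β ≠ 0) (hroot : Polynomial.aeval β p = 0) : IsIntegral ℤ β⁻¹ := by
  have hc0 : p.coeff 0 ≠ 0 := fun h => by simp [h] at hu
  have hp0 : p ≠ 0 := fun h => by simp [h] at hc0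
  have hc2 : p.coeff 0 * p.coeff 0 = 1 := by
    rcases Int.isUnit_iff.mp hu with h | h <;> rw [h] <;> norm_num
  have : Invertible β := invertibleOfNonzero hβ
  refine ⟨p.coeff 0 • p.reverse, ?_, ?_⟩
  · unfold Polynomial.Monic
    rw [Polynomial.smul_eq_C_mul, Polynomial.leadingCoeff_mul', Polynomial.leadingCoeff_C,
      Polynomial.reverse_leadingCoeff, Polynomial.trailingCoeff,
      Polynomial.natTrailingDegree_eq_zero.mpr (Or.inr hc0), hc2]
    rw [Polynomial.leadingCoeff_C, Polynomial.reverse_leadingCoeff, Polynomial.trailingCoeff,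
      Polynomial.natTrailingDegree_eq_zero.mpr (Or.inr hc0), hc2]
    norm_num
  · have h := Polynomial.eval₂_reverse_eq_zero_iff (algebraMap ℤ ℂ) β p
    rw [invOf_eq_inv] at h
    rw [Polynomial.smul_eq_C_mul, Polynomial.eval₂_mul, Polynomial.eval₂_C]
    rw [h.mpr (by rwa [← Polynomial.aeval_def]), mul_zero]

lemma matrix_map_mul_intCast {a b c : Type*} [Fintype b] (X : Matrix a b ℤ) (Y : Matrix b c ℤ) :
    (X * Y).map (Int.cast : ℤ → ℂ) = X.map (Int.cast : ℤ → ℂ) * Y.map (Int.cast : ℤ → ℂ) := by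
  ext i j
  simp only [Matrix.map_apply, Matrix.mul_apply]
  push_cast
  rfl

theorem auxDir1 (n : ℕ) (A : Matrix (Fin n) (Fin n) ℤ)
    (h : (⋂ k : ℕ, Set.range ((A ^ (k + 1)).mulVec)) = {0}) :
    ∀ α : ℂ, (Polynomial.aeval α) A.charpoly = 0 → α = 0 ∨ ¬ IsIntegral ℤ α⁻¹ := by
  by_contra hcon
  push_neg at hcon
  obtain ⟨α, hαroot, hα0, hαinv⟩ := hcon
  have hintα : IsIntegral ℤ α :=
    ⟨A.charpoly, A.charpoly_monic, by rwa [← Polynomial.aeval_def]⟩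
  have hgmonic := minpoly.monic hαinv
  have hrev : Polynomial.aeval α (minpoly ℤ α⁻¹).reverse = 0 := by
    have hinv1 : Invertible (α⁻¹ : ℂ) := invertibleOfNonzero (inv_ne_zero hα0)
    have h2 := Polynomial.eval₂_reverse_eq_zero_iff (algebraMap ℤ ℂ) α⁻¹ (minpoly ℤ α⁻¹)
    rw [invOf_eq_inv, inv_inv] at h2
    rw [Polynomial.aeval_def]
    exact h2.mpr (by rw [← Polynomial.aeval_def]; exact minpoly.aeval ℤ α⁻¹)
  set f := minpoly ℤ α with hf
  have hdvd : f ∣ (minpoly ℤ α⁻¹).reverse := minpoly.isIntegrallyClosed_dvd hintα hrev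
  have hfc : IsUnit (f.coeff 0) := by
    obtain ⟨q, hq⟩ := hdvd
    have h3 : (1 : ℤ) = f.coeff 0 * q.coeff 0 := by
      have h4 := congrArg (fun p => Polynomial.coeff p 0) hq
      simpa [Polynomial.mul_coeff_zero, Polynomial.coeff_zero_reverse,
        hgmonic.leadingCoeff] using h4
    exact IsUnit.of_mul_eq_one _ h3.symm
  -- α is a root of charpoly of A over ℂ
  have hroot' : (Matrix.charpoly (A.map (Int.cast : ℤ → ℂ))).eval α = 0 := by
    have : A.map (Int.cast : ℤ → ℂ) = A.map ⇑(Int.castRingHom ℂ) := rfl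
    rw [this, Matrix.charpoly_map, Polynomial.eval_map]
    rwa [Polynomial.aeval_def, algebraMap_int_eq] at hαroot
  obtain ⟨w, hw0, hww⟩ := (charpoly_eval_eq_zero_iff _ α).mp hroot'
  have h1 : (Polynomial.aeval (A.map (Int.cast : ℤ → ℂ)) f) *ᵥ w = 0 := by
    rw [aeval_mulVec _ hww f, minpoly.aeval, zero_smul]
  have hdet : (Polynomial.aeval A f).det = 0 := by
    have h2 : (Polynomial.aeval (A.map (Int.cast : ℤ → ℂ)) f).det = 0 :=
      Matrix.exists_mulVec_eq_zero_iff.mp ⟨w, hw0, h1⟩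
    rw [← map_aeval_matrix] at h2
    have h5 := RingHom.map_det (Int.castRingHom ℂ) (Polynomial.aeval A f)
    rw [RingHom.mapMatrix_apply] at h5
    simp only [Int.coe_castRingHom, eq_intCast] at h5
    rw [h2] at h5
    exact_mod_cast h5
  obtain ⟨v, hv0, hfv⟩ := Matrix.exists_mulVec_eq_zero_iff.mpr hdet
  set c := f.coeff 0 with hc
  have hc2 : c * c = 1 := by
    rcases Int.isUnit_iff.mp hfc with h' | h' <;> rw [h'] <;> norm_num
  set D := Polynomial.aeval A f.divX with hD
  have hAD : (A * D) *ᵥ v = (-c) • v := by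
    have h3 : Polynomial.aeval A (Polynomial.X * f.divX + Polynomial.C c) = Polynomial.aeval A f := by
      rw [Polynomial.X_mul_divX_add]
    rw [map_add, _root_.map_mul, Polynomial.aeval_X, Polynomial.aeval_C] at h3
    have h4 := congrArg (fun N => N *ᵥ v) h3
    simp only [Matrix.add_mulVec, hfv] at h4
    rw [Algebra.algebraMap_eq_smul_one, Matrix.smul_mulVec, Matrix.one_mulVec] at h4
    have h5 := congrArg (fun z => z - c • v) h4
    simp only [add_sub_cancel_right, zero_sub] at h5
    rw [h5, neg_smul]
  set B := (-c) • D with hB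
  have hABv : (A * B) *ᵥ v = v := by
    rw [hB, Matrix.mul_smul, Matrix.smul_mulVec, hAD, smul_smul, neg_mul_neg, hc2, one_smul]
  have hcomm : Commute A B := by
    have hAD' : A * D = D * A := by
      rw [hD]
      calc A * (Polynomial.aeval A f.divX)
          = Polynomial.aeval A (Polynomial.X * f.divX) := by
            rw [_root_.map_mul, Polynomial.aeval_X]
        _ = Polynomial.aeval A (f.divX * Polynomial.X) := by rw [mul_comm]
        _ = (Polynomial.aeval A f.divX) * A := by rw [_root_.map_mul, Polynomial.aeval_X]
    have hAD2 : Commute A D := hAD'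
    exact hAD2.smul_right _
  have hmem : ∀ k : ℕ, v ∈ Set.range ((A ^ (k + 1)).mulVec) := by
    intro k
    have hpow : ∀ j : ℕ, ((A * B) ^ j) *ᵥ v = v := by
      intro j; induction j with
      | zero => simp
      | succ j ih => rw [pow_succ, ← Matrix.mulVec_mulVec, hABv, ih]
    refine ⟨(B ^ (k + 1)) *ᵥ v, ?_⟩
    rw [Matrix.mulVec_mulVec, ← Commute.mul_pow hcomm, hpow (k + 1)]
  have hmem' : v ∈ ⋂ k : ℕ, Set.range ((A ^ (k + 1)).mulVec) := Set.mem_iInter.mpr hmem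
  rw [h] at hmem'
  exact hv0 hmem'

theorem auxDir2 (n : ℕ) (A : Matrix (Fin n) (Fin n) ℤ)
    (hroots : ∀ α : ℂ, (Polynomial.aeval α) A.charpoly = 0 →
      α = 0 ∨ ¬ IsIntegral ℤ α⁻¹) :
    (⋂ k : ℕ, Set.range ((A ^ (k + 1)).mulVec)) = {0} := by
  apply Set.eq_singleton_iff_unique_mem.mpr
  refine ⟨Set.mem_iInter.mpr fun k => ⟨0, Matrix.mulVec_zero _⟩, ?_⟩
  intro v hv
  by_contra hv0
  set f := Matrix.mulVecLin A with hfdef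
  have hpowf : ∀ (k : ℕ) (x : Fin n → ℤ), (A ^ k) *ᵥ x = (f ^ k) x := by
    intro k; induction k with
    | zero => intro x; simp
    | succ k ih =>
        intro x
        rw [pow_succ, pow_succ, ← Matrix.mulVec_mulVec, Module.End.mul_apply]
        rw [ih (A *ᵥ x)]
        rw [hfdef, Matrix.mulVecLin_apply]
  set I : Submodule ℤ (Fin n → ℤ) := ⨅ k : ℕ, LinearMap.range (f ^ (k + 1)) with hI
  have hvI : v ∈ I := by
    rw [hI, Submodule.mem_iInf]
    intro k
    obtain ⟨u, hu⟩ := Set.mem_iInter.mp hv k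
    exact ⟨u, by rw [← hpowf]; exact hu⟩
  clear_value I
  clear_value f
  have hker_mono : Monotone fun k : ℕ => LinearMap.ker (f ^ k) := by
    intro a b hab x hx
    simp only [LinearMap.mem_ker] at *
    have hba : f ^ b = f ^ (b - a) * f ^ a := by rw [← pow_add, Nat.sub_add_cancel hab]
    rw [hba, Module.End.mul_apply, hx, map_zero]
  obtain ⟨m, hm⟩ := monotone_stabilizes_iff_noetherian.mpr inferInstance
    ⟨fun k : ℕ => LinearMap.ker (f ^ k), hker_mono⟩
  have hrange_anti : ∀ {a b : ℕ}, a ≤ b →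
      LinearMap.range (f ^ b) ≤ LinearMap.range (f ^ a) := by
    intro a b hab
    have hba : f ^ b = f ^ a * f ^ (b - a) := by rw [← pow_add, Nat.add_sub_cancel' hab]
    rw [hba]
    rintro _ ⟨y, rfl⟩
    exact ⟨(f ^ (b - a)) y, rfl⟩
  have hIle : ∀ k : ℕ, I ≤ LinearMap.range (f ^ (k + 1)) := by
    intro k; rw [hI]; exact iInf_le _ k
  have hIlem : I ≤ LinearMap.range (f ^ m) := le_trans (hIle m) (hrange_anti (Nat.le_succ m))
  have hinj : ∀ x ∈ LinearMap.range (f ^ m), f x = 0 → x = 0 := by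
    rintro _ ⟨y, rfl⟩ h0
    have hy : (f ^ (m + 1)) y = 0 := by rw [pow_succ', Module.End.mul_apply]; exact h0
    have hy2 : y ∈ LinearMap.ker (f ^ (m + 1)) := hy
    have hml : LinearMap.ker (f ^ m) = LinearMap.ker (f ^ (m + 1)) :=
      hm (m + 1) (Nat.le_succ m)
    rw [← hml] at hy2
    exact hy2
  have hfI : ∀ x ∈ I, f x ∈ I := by
    intro x hx
    rw [hI, Submodule.mem_iInf] at hx ⊢
    intro k
    obtain ⟨y, hy⟩ := hx k
    refine ⟨f y, ?_⟩
    calc (f ^ (k + 1)) (f y) = (f ^ (k + 1) * f) y := rfl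
      _ = (f * f ^ (k + 1)) y := by rw [← pow_succ, ← pow_succ']
      _ = f x := by rw [Module.End.mul_apply, hy]
  have hsurj : ∀ w ∈ I, ∃ u ∈ I, f u = w := by
    intro w hw
    obtain ⟨y, hy⟩ := hIle m hw
    refine ⟨(f ^ m) y, ?_, ?_⟩
    · rw [hI, Submodule.mem_iInf]
      intro k
      obtain ⟨y', hy'⟩ := hIle (m + k + 1) hw
      have h1 : f ((f ^ m) y) = w := by
        rw [← Module.End.mul_apply, ← pow_succ']; exact hy
      have h2 : f ((f ^ (m + k + 1)) y') = w := by
        rw [← Module.End.mul_apply, ← pow_succ']; exact hy'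
      have hmem1 : (f ^ m) y ∈ LinearMap.range (f ^ m) := ⟨y, rfl⟩
      have hmem2 : (f ^ (m + k + 1)) y' ∈ LinearMap.range (f ^ m) :=
        hrange_anti (by omega) ⟨y', rfl⟩
      have hdiff : f ((f ^ m) y - (f ^ (m + k + 1)) y') = 0 := by
        rw [map_sub, h1, h2, sub_self]
      have heq : (f ^ m) y = (f ^ (m + k + 1)) y' :=
        sub_eq_zero.mp (hinj _ (Submodule.sub_mem _ hmem1 hmem2) hdiff)
      rw [heq]
      exact hrange_anti (by omega) ⟨y', rfl⟩
    · rw [← Module.End.mul_apply, ← pow_succ']; exact hy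
  set g : I →ₗ[ℤ] I := f.restrict hfI with hgdef
  have hginj : Function.Injective g := by
    intro x y hxy
    apply Subtype.ext
    have hfeq : f x.val = f y.val := by
      have hcoe := congrArg Subtype.val hxy
      rwa [hgdef, LinearMap.restrict_coe_apply, LinearMap.restrict_coe_apply] at hcoe
    have hz : f (x.val - y.val) = 0 := by rw [map_sub, hfeq, sub_self]
    exact sub_eq_zero.mp (hinj _ (hIlem (Submodule.sub_mem _ x.2 y.2)) hz)
  have hgsurj : Function.Surjective g := by
    rintro ⟨z, hz⟩
    obtain ⟨u, hu, hu2⟩ := hsurj z hz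
    exact ⟨⟨u, hu⟩, Subtype.ext (by rw [hgdef, LinearMap.restrict_coe_apply]; exact hu2)⟩
  haveI : Nontrivial I :=
    ⟨⟨v, hvI⟩, 0, fun hcon => hv0 (by simpa using congrArg Subtype.val hcon)⟩
  set b := Module.Free.chooseBasis ℤ I with hb
  haveI : Nonempty (Module.Free.ChooseBasisIndex ℤ ↥I) := b.index_nonempty
  set M := LinearMap.toMatrix b b g with hM
  have hdetu : IsUnit M.det := by
    set e := LinearEquiv.ofBijective g ⟨hginj, hgsurj⟩ with he
    have hge : (g : I →ₗ[ℤ] I) = (e : I →ₗ[ℤ] I) := rfl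
    have h1 : M * LinearMap.toMatrix b b (e.symm : I →ₗ[ℤ] I) = 1 := by
      rw [hM, ← LinearMap.toMatrix_comp b b b]
      have : g ∘ₗ (e.symm : I →ₗ[ℤ] I) = LinearMap.id := by
        ext x
        simp [hge]
      rw [this, LinearMap.toMatrix_id]
    have h2 := congrArg Matrix.det h1
    rw [Matrix.det_mul, Matrix.det_one] at h2
    exact IsUnit.of_mul_eq_one _ h2
  have hcu : IsUnit (M.charpoly.coeff 0) := by
    have hds := Matrix.det_eq_sign_charpoly_coeff M
    rw [hds] at hdetu
    exact (IsUnit.mul_iff.mp hdetu).2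
  have hpmonic := M.charpoly_monic
  have hdeg : 0 < M.charpoly.natDegree := by
    rw [Matrix.charpoly_natDegree_eq_dim]
    exact Fintype.card_pos
  have hdegC : 0 < (M.charpoly.map (Int.castRingHom ℂ)).degree := by
    rw [Polynomial.degree_map_eq_of_leadingCoeff_ne_zero]
    · exact Polynomial.natDegree_pos_iff_degree_pos.mp hdeg
    · rw [hpmonic.leadingCoeff]; simp
  obtain ⟨β, hβ⟩ := Complex.exists_root hdegC
  have hβroot : (M.map (Int.cast : ℤ → ℂ)).charpoly.eval β = 0 := by
    have hcm : (M.map (Int.cast : ℤ → ℂ)).charpoly = M.charpoly.map (Int.castRingHom ℂ) :=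
      Matrix.charpoly_map M (Int.castRingHom ℂ)
    rw [hcm]
    exact hβ
  have hβ0 : β ≠ 0 := by
    intro h0
    rw [h0] at hβ
    have h1 : (M.charpoly.map (Int.castRingHom ℂ)).coeff 0 = 0 := by
      rw [Polynomial.coeff_zero_eq_eval_zero]
      exact hβ
    rw [Polynomial.coeff_map] at h1
    simp only [eq_intCast] at h1
    have h2 : M.charpoly.coeff 0 = 0 := by exact_mod_cast h1
    rw [h2] at hcu
    exact (by simp : ¬ IsUnit (0 : ℤ)) hcu
  have hβinv : IsIntegral ℤ β⁻¹ := by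
    apply isIntegral_inv_of_unit_coeff_zero hcu hβ0
    rw [Polynomial.aeval_def, ← Polynomial.eval_map, algebraMap_int_eq]
    exact hβ
  obtain ⟨w, hw0, hww⟩ :=
    (charpoly_eval_eq_zero_iff (M.map (Int.cast : ℤ → ℂ)) β).mp hβroot
  -- the matrix of basis vectors
  set P : Matrix (Fin n) (Module.Free.ChooseBasisIndex ℤ ↥I) ℤ :=
    Matrix.of (fun i j => ((b j : I) : Fin n → ℤ) i) with hP
  have hAP : A * P = P * M := by
    ext i j
    rw [Matrix.mul_apply, Matrix.mul_apply]
    have h1 : ∑ k, A i k * P k j = (A *ᵥ ((b j : I) : Fin n → ℤ)) i := by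
      simp [Matrix.mulVec, dotProduct, hP]
    have h2 : (A *ᵥ ((b j : I) : Fin n → ℤ)) = ((g (b j) : I) : Fin n → ℤ) := by
      rw [hgdef, LinearMap.restrict_coe_apply, hfdef, Matrix.mulVecLin_apply]
    have h3 : g (b j) = ∑ l, M l j • b l := by
      conv_lhs => rw [← Module.Basis.sum_repr b (g (b j))]
      apply Finset.sum_congr rfl
      intro l _
      rw [hM, LinearMap.toMatrix_apply]
    have h4 : ((g (b j) : I) : Fin n → ℤ) i = ∑ l, M l j * ((b l : I) : Fin n → ℤ) i := by
      rw [h3]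
      push_cast
      rw [Finset.sum_apply]
      apply Finset.sum_congr rfl
      intro l _
      simp [smul_eq_mul]
    rw [h1, h2, h4]
    apply Finset.sum_congr rfl
    intro l _
    rw [mul_comm, hP]
    rfl
  have hAPC : (A.map (Int.cast : ℤ → ℂ)) * (P.map (Int.cast : ℤ → ℂ)) =
      (P.map (Int.cast : ℤ → ℂ)) * (M.map (Int.cast : ℤ → ℂ)) := by
    have h1 := congrArg (fun (N : Matrix (Fin n) _ ℤ) => N.map (Int.cast : ℤ → ℂ)) hAP
    rw [matrix_map_mul_intCast, matrix_map_mul_intCast] at h1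
    exact h1
  have hcols : ∀ z : Module.Free.ChooseBasisIndex ℤ ↥I → ℤ, P *ᵥ z = 0 → z = 0 := by
    intro z hz
    have hsum : (∑ l, z l • b l : I) = 0 := by
      have hcoe : ((∑ l, z l • b l : I) : Fin n → ℤ) = P *ᵥ z := by
        push_cast
        ext i
        rw [Finset.sum_apply]
        simp [Matrix.mulVec, dotProduct, hP, smul_eq_mul, mul_comm]
      apply Subtype.ext
      rw [hcoe, hz]
      rfl
    have hli := Fintype.linearIndependent_iff.mp b.linearIndependent z hsum
    funext l
    exact hli l
  have hGdet : (Pᵀ * P).det ≠ 0 := by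
    intro hdet
    obtain ⟨z, hz0, hzz⟩ := Matrix.exists_mulVec_eq_zero_iff.mpr hdet
    have h5 : (P *ᵥ z) ⬝ᵥ (P *ᵥ z) = 0 := by
      have h6 : z ⬝ᵥ ((Pᵀ * P) *ᵥ z) = 0 := by rw [hzz, dotProduct_zero]
      rwa [← Matrix.mulVec_mulVec, Matrix.dotProduct_mulVec, Matrix.vecMul_transpose] at h6
    have h7 : P *ᵥ z = 0 := by
      funext i
      have h8 := Finset.sum_eq_zero_iff_of_nonneg
        (fun i _ => mul_self_nonneg ((P *ᵥ z) i)) |>.mp h5 i (Finset.mem_univ i)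
      exact mul_self_eq_zero.mp h8
    exact hz0 (hcols z h7)
  have hPinj : ∀ z : Module.Free.ChooseBasisIndex ℤ ↥I → ℂ,
      (P.map (Int.cast : ℤ → ℂ)) *ᵥ z = 0 → z = 0 := by
    intro z hz
    have h6 : ((Pᵀ * P).map (Int.cast : ℤ → ℂ)) *ᵥ z = 0 := by
      rw [matrix_map_mul_intCast]
      have ht : (Pᵀ).map (Int.cast : ℤ → ℂ) = (P.map (Int.cast : ℤ → ℂ))ᵀ :=
        Matrix.transpose_map
      rw [ht, ← Matrix.mulVec_mulVec, hz, Matrix.mulVec_zero]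
    have h7 : (((Pᵀ * P).map (Int.cast : ℤ → ℂ))).det ≠ 0 := by
      have h8 := RingHom.map_det (Int.castRingHom ℂ) (Pᵀ * P)
      rw [RingHom.mapMatrix_apply] at h8
      simp only [Int.coe_castRingHom, eq_intCast] at h8
      rw [← h8]
      exact_mod_cast hGdet
    exact Matrix.eq_zero_of_mulVec_eq_zero h7 h6
  set u := (P.map (Int.cast : ℤ → ℂ)) *ᵥ w with hu
  have hu0 : u ≠ 0 := fun hcon => hw0 (hPinj w hcon)
  have hAu : (A.map (Int.cast : ℤ → ℂ)) *ᵥ u = β • u := by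
    rw [hu, Matrix.mulVec_mulVec, hAPC, ← Matrix.mulVec_mulVec, hww, Matrix.mulVec_smul]
  have hfinal : ((A.map (Int.cast : ℤ → ℂ)).charpoly).eval β = 0 :=
    (charpoly_eval_eq_zero_iff _ β).mpr ⟨u, hu0, hAu⟩
  have hfinal2 : (Polynomial.aeval β) A.charpoly = 0 := by
    have hcm : (A.map (Int.cast : ℤ → ℂ)).charpoly = A.charpoly.map (Int.castRingHom ℂ) :=
      Matrix.charpoly_map A (Int.castRingHom ℂ)
    rw [Polynomial.aeval_def, algebraMap_int_eq, ← Polynomial.eval_map, ← hcm]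
    exact hfinal
  rcases hroots β hfinal2 with hcase | hcase
  · exact hβ0 hcase
  · exact hcase hβinv


/-- **Lemma.** For an `n×n` integer matrix `A`, `⋂_{k≥1} im Aᵏ = 0` if and only if every
complex root `α` of the characteristic polynomial of `A` is either `0` or has `α⁻¹` not
integral over `ℤ` (i.e. `α⁻¹` is not an algebraic integer). -/
theorem inter_range_pow_eq_bot_iff_eigenvalues
    (n : ℕ) (A : Matrix (Fin n) (Fin n) ℤ) :
    (⋂ k : ℕ, Set.range ((A ^ (k + 1)).mulVec)) = {0} ↔
      ∀ α : ℂ, (Polynomial.aeval α) A.charpoly = 0 →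
        α = 0 ∨ ¬ IsIntegral ℤ α⁻¹ :=
  ⟨auxDir1 n A, auxDir2 n A⟩
end

section
/- Let A be an n×n integer matrix with ⋂_{k=1}^∞ im A^k = 0. Then the transpose Aᵀ also satisfies ⋂_{k=1}^∞ im (Aᵀ)^k = 0. -/
open Polynomial Matrix

namespace InterRangePowAux

variable {n : ℕ}

/-- coordinatewise cast `ℤⁿ → ℚⁿ` -/
def castQ (v : Fin n → ℤ) : Fin n → ℚ := fun i => (v i : ℚ)

lemma castQ_injective : Function.Injective (castQ (n := n)) := by
  intro v w h
  funext i
  have := congrFun h i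
  simp only [castQ] at this
  exact_mod_cast this

lemma castQ_zero : castQ (0 : Fin n → ℤ) = 0 := by
  funext i; simp [castQ]

lemma castQ_mulVec (C : Matrix (Fin n) (Fin n) ℤ) (v : Fin n → ℤ) :
    castQ (C.mulVec v) = (C.map (Int.cast : ℤ → ℚ)).mulVec (castQ v) := by
  funext i
  exact RingHom.map_mulVec (Int.castRingHom ℚ) C v i

lemma mulVecLin_pow {R : Type*} [CommRing R] (C : Matrix (Fin n) (Fin n) R) (m : ℕ) :
    (C ^ m).mulVecLin = (C.mulVecLin) ^ m := by
  induction m with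
  | zero => rw [pow_zero, pow_zero, Matrix.mulVecLin_one]; rfl
  | succ m ih =>
      rw [pow_succ, pow_succ, Matrix.mulVecLin_mul, ih]
      rfl

lemma aeval_mulVecLin (B : Matrix (Fin n) (Fin n) ℤ) (g : ℤ[X]) :
    Matrix.mulVecLin (aeval B g) = aeval (Matrix.mulVecLin B) g := by
  have h1 : ∀ (C : Matrix (Fin n) (Fin n) ℤ), Matrix.mulVecLin C = Matrix.toLinAlgEquiv' C := by
    intro C; ext v; simp [Matrix.toLinAlgEquiv'_apply, Matrix.mulVecLin_apply]
  rw [h1, h1]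
  exact (Polynomial.aeval_algHom_apply
    (Matrix.toLinAlgEquiv' (R := ℤ) (n := Fin n)).toAlgHom B g).symm

lemma aeval_transpose (B : Matrix (Fin n) (Fin n) ℤ) (g : ℤ[X]) :
    (aeval B g)ᵀ = aeval Bᵀ g := by
  rw [Polynomial.aeval_eq_sum_range (x := B), Polynomial.aeval_eq_sum_range (x := Bᵀ), transpose_sum]
  refine Finset.sum_congr rfl fun i _ => ?_
  rw [transpose_smul, transpose_pow]

/-- Key step: if a nonzero integer vector lies in all images `B^k ℤⁿ`, then some nonzero
integer vector lies in all images `(Bᵀ)^k ℤⁿ`. -/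
lemma key (B : Matrix (Fin n) (Fin n) ℤ) (x : Fin n → ℤ) (hx : x ≠ 0)
    (hm : ∀ k : ℕ, x ∈ Set.range ((B ^ (k + 1)).mulVec)) :
    ∃ z : Fin n → ℤ, z ≠ 0 ∧ ∀ k : ℕ, z ∈ Set.range ((Bᵀ ^ (k + 1)).mulVec) := by
  classical
  set fz : (Fin n → ℤ) →ₗ[ℤ] (Fin n → ℤ) := B.mulVecLin with hfz
  set Bq : Matrix (Fin n) (Fin n) ℚ := B.map (Int.cast : ℤ → ℚ) with hBq
  set fq : (Fin n → ℚ) →ₗ[ℚ] (Fin n → ℚ) := Bq.mulVecLin with hfq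
  -- cast compatibility
  have hc1 : ∀ v, castQ (fz v) = fq (castQ v) := by
    intro v
    simpa [hfz, hfq, hBq, Matrix.mulVecLin_apply] using castQ_mulVec B v
  have hc : ∀ (m : ℕ) (v), castQ ((fz ^ m) v) = (fq ^ m) (castQ v) := by
    intro m
    induction m with
    | zero => intro v; rfl
    | succ m ih =>
        intro v
        rw [pow_succ, pow_succ, Module.End.mul_apply, Module.End.mul_apply, ← hc1]
        exact ih (fz v)
  -- the chains of images
  set R : ℕ → Submodule ℤ (Fin n → ℤ) := fun k => LinearMap.range (fz ^ (k + 1)) with hR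
  set W : ℕ → Submodule ℚ (Fin n → ℚ) := fun k => LinearMap.range (fq ^ (k + 1)) with hW
  have hmem : ∀ k, x ∈ R k := by
    intro k
    obtain ⟨w, hw⟩ := hm k
    exact ⟨w, by rw [hfz, ← mulVecLin_pow]; simpa [Matrix.mulVecLin_apply] using hw⟩
  have hRanti : Antitone R := by
    refine antitone_nat_of_succ_le fun k => ?_
    rintro y ⟨w, rfl⟩
    exact ⟨fz w, by rw [← Module.End.mul_apply, ← pow_succ]⟩
  have hWanti : Antitone W := by
    refine antitone_nat_of_succ_le fun k => ?_
    rintro y ⟨w, rfl⟩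
    exact ⟨fq w, by rw [← Module.End.mul_apply, ← pow_succ]⟩
  have hcastRW : ∀ k (y : Fin n → ℤ), y ∈ R k → castQ y ∈ W k := by
    rintro k y ⟨w, rfl⟩
    exact ⟨castQ w, (hc (k + 1) w).symm⟩
  -- stabilization of the rational chain
  obtain ⟨K, hK⟩ : ∃ K : ℕ, ∀ k, K ≤ k → W k = W K := by
    have hne : (Set.range fun k => Module.finrank ℚ (W k)).Nonempty := ⟨_, ⟨0, rfl⟩⟩
    obtain ⟨K, hKval⟩ : ∃ K, Module.finrank ℚ (W K) =
        sInf (Set.range fun k => Module.finrank ℚ (W k)) := by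
      obtain ⟨K, hK⟩ := Nat.sInf_mem hne
      exact ⟨K, hK⟩
    refine ⟨K, fun k hk => ?_⟩
    refine Submodule.eq_of_le_of_finrank_le (hWanti hk) ?_
    rw [hKval]
    exact Nat.sInf_le ⟨k, rfl⟩
  -- fq maps W K onto W K
  have hmapW : ∀ k, Submodule.map fq (W k) = W (k + 1) := by
    intro k
    have hcomp : fq ∘ₗ (fq ^ (k + 1)) = fq ^ (k + 1 + 1) := by
      rw [← Module.End.mul_eq_comp, ← pow_succ']
    show Submodule.map fq (LinearMap.range (fq ^ (k + 1))) = LinearMap.range (fq ^ (k + 1 + 1))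
    rw [← LinearMap.range_comp, hcomp]
  -- injectivity of fq on W K
  have hWstable : ∀ v ∈ W K, fq v ∈ W K := by
    intro v hv
    have : fq v ∈ Submodule.map fq (W K) := Submodule.mem_map_of_mem hv
    rw [hmapW K] at this
    exact hWanti (Nat.le_succ K) this
  have hinjW : ∀ u ∈ W K, ∀ v ∈ W K, fq u = fq v → u = v := by
    set φq : ↥(W K) →ₗ[ℚ] ↥(W K) := fq.restrict hWstable with hφq
    have hsurj : Function.Surjective φq := by
      rintro ⟨y, hy⟩
      have hy' : y ∈ W (K + 1) := by rw [hK (K + 1) (Nat.le_succ K)]; exact hy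
      rw [← hmapW K] at hy'
      obtain ⟨u, hu, huy⟩ := hy'
      exact ⟨⟨u, hu⟩, Subtype.ext huy⟩
    have hinj : Function.Injective φq := by
      rw [LinearMap.injective_iff_surjective]
      exact hsurj
    intro u hu v hv huv
    have : φq ⟨u, hu⟩ = φq ⟨v, hv⟩ := Subtype.ext (by
      simp only [hφq, LinearMap.restrict_apply]
      exact huv)
    simpa using congrArg Subtype.val (hinj this)
  -- the intersection submodule over ℤ
  set M : Submodule ℤ (Fin n → ℤ) := ⨅ k, R k with hM
  have hxM : x ∈ M := Submodule.mem_iInf R |>.2 hmem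
  have hMR : ∀ k, M ≤ R k := fun k => iInf_le R k
  have hMW : ∀ v ∈ M, castQ v ∈ W K := fun v hv => hcastRW K v (hMR K hv)
  -- fz maps M into M
  have hMstable : ∀ v ∈ M, fz v ∈ M := by
    intro v hv
    rw [Submodule.mem_iInf]
    intro k
    obtain ⟨w, hw⟩ := hMR k hv
    refine hRanti (Nat.le_succ k) ⟨w, ?_⟩
    rw [pow_succ', Module.End.mul_apply, hw]
  -- fz is injective on M
  have hinjM : ∀ u ∈ M, ∀ v ∈ M, fz u = fz v → u = v := by
    intro u hu v hv huv
    refine castQ_injective ?_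
    refine hinjW _ (hMW u hu) _ (hMW v hv) ?_
    rw [← hc1, ← hc1, huv]
  -- fz maps M onto M
  have hsurjM : ∀ v ∈ M, ∃ y ∈ M, fz y = v := by
    intro v hv
    have hyk : ∀ k, ∃ y ∈ R k, fz y = v := by
      intro k
      obtain ⟨w, hw⟩ := hMR (k + 1) hv
      refine ⟨(fz ^ (k + 1)) w, ⟨w, rfl⟩, ?_⟩
      rw [← Module.End.mul_apply, ← pow_succ', hw]
    obtain ⟨y, hyR, hyv⟩ := hyk K
    have hyall : ∀ k, y ∈ R k := by
      intro k
      rcases le_total k K with h | h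
      · exact hRanti h hyR
      · obtain ⟨y', hy'R, hy'v⟩ := hyk k
        have : y' = y := by
          refine castQ_injective (hinjW _ ?_ _ ?_ ?_)
          · exact hK k h ▸ hcastRW k y' hy'R
          · exact hcastRW K y hyR
          · rw [← hc1, ← hc1, hy'v, hyv]
        exact this ▸ hy'R
    exact ⟨y, Submodule.mem_iInf R |>.2 hyall, hyv⟩
  -- the restricted endomorphism of M
  set φ : ↥M →ₗ[ℤ] ↥M := fz.restrict hMstable with hφ
  have hφbij : Function.Bijective φ := by
    constructor
    · rintro ⟨u, hu⟩ ⟨v, hv⟩ huv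
      refine Subtype.ext (hinjM u hu v hv ?_)
      have := congrArg Subtype.val huv
      simpa [hφ, LinearMap.restrict_apply] using this
    · rintro ⟨v, hv⟩
      obtain ⟨y, hy, hyv⟩ := hsurjM v hv
      exact ⟨⟨y, hy⟩, Subtype.ext (by simpa [hφ, LinearMap.restrict_apply] using hyv)⟩
  -- characteristic polynomial of φ
  set g : ℤ[X] := LinearMap.charpoly φ with hg
  have hCH : aeval φ g = 0 := LinearMap.aeval_self_charpoly φ
  have hg0 : IsUnit (g.coeff 0) := by
    have hdet : IsUnit (LinearMap.det φ) := by
      have := (LinearEquiv.ofBijective φ hφbij).isUnit_det'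
      exact this
    rw [LinearMap.det_eq_sign_charpoly_coeff] at hdet
    exact isUnit_of_mul_isUnit_right hdet
  -- transport Cayley-Hamilton to ℤⁿ
  have hres : ∀ (p : ℤ[X]) (v : ↥M), (aeval fz p) (v : Fin n → ℤ) = ((aeval φ p) v : Fin n → ℤ) := by
    have hpow : ∀ (m : ℕ) (v : ↥M), (fz ^ m) (v : Fin n → ℤ) = ((φ ^ m) v : Fin n → ℤ) := by
      intro m
      induction m with
      | zero => intro v; rfl
      | succ m ih =>
          intro v
          rw [pow_succ', Module.End.mul_apply, pow_succ', Module.End.mul_apply, ih v]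
          simp [hφ, LinearMap.restrict_apply]
    intro p
    induction p using Polynomial.induction_on' with
    | add p q hp hq =>
        intro v
        simp only [map_add, LinearMap.add_apply, hp, hq, Submodule.coe_add]
    | monomial m a =>
        intro v
        rw [aeval_monomial, aeval_monomial]
        simp only [Module.End.mul_apply, Module.algebraMap_end_apply, LinearMap.smul_apply]
        rw [hpow m v]
        simp
  have hgx : (aeval fz g) x = 0 := by
    have := hres g ⟨x, hxM⟩
    rw [hCH] at this
    simpa using this
  -- determinant of g(B) vanishes
  have hgB : (aeval B g).mulVec x = 0 := by
    have := aeval_mulVecLin B g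
    have h2 : (aeval B g).mulVecLin x = (aeval fz g) x := by rw [this, hfz]
    rw [hgx] at h2
    simpa [Matrix.mulVecLin_apply] using h2
  have hdetgB : (aeval B g).det = 0 :=
    (Matrix.exists_mulVec_eq_zero_iff).1 ⟨x, hx, hgB⟩
  have hdetgBT : (aeval Bᵀ g).det = 0 := by
    rw [← aeval_transpose, Matrix.det_transpose]
    exact hdetgB
  obtain ⟨z, hz0, hz⟩ : ∃ z, z ≠ 0 ∧ (aeval Bᵀ g).mulVec z = 0 :=
    (Matrix.exists_mulVec_eq_zero_iff).2 hdetgBT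
  -- the "unit constant term" trick: every kernel vector of g(Bᵀ) is divisible by Bᵀ
  have hstep : ∀ v, (aeval Bᵀ g).mulVec v = 0 →
      ∃ w, (aeval Bᵀ g).mulVec w = 0 ∧ Bᵀ.mulVec w = v := by
    intro v hv
    obtain ⟨ε, hε⟩ := hg0
    have hε2 : (ε : ℤ) * (ε : ℤ) = 1 := by
      rcases Int.isUnit_iff.1 ε.isUnit with h | h <;> simp [h]
    have hsplit : (aeval Bᵀ g) = Bᵀ * aeval Bᵀ g.divX + (ε : ℤ) • (1 : Matrix (Fin n) (Fin n) ℤ) := by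
      conv_lhs => rw [← Polynomial.X_mul_divX_add g]
      rw [map_add, _root_.map_mul, aeval_X, aeval_C, ← hε, Algebra.algebraMap_eq_smul_one]
    refine ⟨(-(ε : ℤ)) • ((aeval Bᵀ g.divX).mulVec v), ?_, ?_⟩
    · rw [Matrix.mulVec_smul, Matrix.mulVec_mulVec]
      have hcomm : (aeval Bᵀ g) * (aeval Bᵀ g.divX) = (aeval Bᵀ g.divX) * (aeval Bᵀ g) := by
        rw [← _root_.map_mul, ← _root_.map_mul, mul_comm]
      rw [hcomm, ← Matrix.mulVec_mulVec, hv, Matrix.mulVec_zero, smul_zero]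
    · rw [Matrix.mulVec_smul, Matrix.mulVec_mulVec]
      have h0 : (Bᵀ * aeval Bᵀ g.divX).mulVec v + (ε : ℤ) • v = 0 := by
        have := congrArg (fun C => Matrix.mulVec C v) hsplit
        simp only [Matrix.add_mulVec, Matrix.smul_mulVec, Matrix.one_mulVec] at this
        rw [hv] at this
        exact this.symm
      have : (Bᵀ * aeval Bᵀ g.divX).mulVec v = -((ε : ℤ) • v) :=
        eq_neg_of_add_eq_zero_left h0
      rw [this, smul_neg, neg_smul, neg_neg, smul_smul, hε2, one_smul]
  -- iterate to get z ∈ im (Bᵀ)^(k+1) for every k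
  have hiter : ∀ k, ∀ v, (aeval Bᵀ g).mulVec v = 0 → ∃ w, (Bᵀ ^ (k + 1)).mulVec w = v := by
    intro k
    induction k with
    | zero =>
        intro v hv
        obtain ⟨w, _, hw⟩ := hstep v hv
        exact ⟨w, by rwa [pow_one]⟩
    | succ k ih =>
        intro v hv
        obtain ⟨w, hwN, hw⟩ := hstep v hv
        obtain ⟨u, hu⟩ := ih w hwN
        refine ⟨u, ?_⟩
        rw [pow_succ', ← Matrix.mulVec_mulVec, hu, hw]
  exact ⟨z, hz0, fun k => by
    obtain ⟨w, hw⟩ := hiter k z hz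
    exact ⟨w, hw⟩⟩

end InterRangePowAux

/-- **Corollary.** If an `n×n` integer matrix `A` satisfies `⋂_{k≥1} im Aᵏ = 0`, then so does
its transpose: `⋂_{k≥1} im (Aᵀ)ᵏ = 0`. -/
theorem inter_range_pow_transpose_eq_bot
    (n : ℕ) (A : Matrix (Fin n) (Fin n) ℤ)
    (hA : (⋂ k : ℕ, Set.range ((A ^ (k + 1)).mulVec)) = {0}) :
    (⋂ k : ℕ, Set.range ((A.transpose ^ (k + 1)).mulVec)) = {0} := by
  ext y
  simp only [Set.mem_iInter, Set.mem_singleton_iff]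
  constructor
  · intro hy
    by_contra hne
    obtain ⟨z, hz0, hz⟩ := InterRangePowAux.key A.transpose y hne hy
    have hzA : z ∈ ⋂ k : ℕ, Set.range ((A ^ (k + 1)).mulVec) := by
      rw [Set.mem_iInter]
      intro k
      have := hz k
      rwa [Matrix.transpose_transpose] at this
    rw [hA] at hzA
    exact hz0 hzA
  · rintro rfl k
    exact ⟨0, Matrix.mulVec_zero _⟩
end

section
/- Let A be an n×n integer matrix with det A ≠ 0 and ⋂_{k=1}^∞ im A^k = 0. Suppose B is an n×n integer matrix invertible over ℤ (i.e., det B = ±1) such that B·A·B^{-1} is block lower triangular of the form [[A₁, 0], [A₂, A₃]], where A₁ is an r×r block with 1 ≤ r ≤ n. Then |det A₁| > 1. -/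
open Matrix Polynomial

section Aux

variable {n r : ℕ}

/-- Sum over `Fin n` of a function vanishing on indices `≥ r` equals the sum over `Fin r`. -/
private lemma sum_eq_castLE (hrn : r ≤ n) (f : Fin n → ℤ)
    (hf : ∀ t : Fin n, r ≤ (t : ℕ) → f t = 0) :
    ∑ t : Fin n, f t = ∑ t : Fin r, f (Fin.castLE hrn t) := by
  have h2 : ∑ x ∈ Finset.univ.map (Fin.castLEEmb hrn), f x
      = ∑ t : Fin r, f (Fin.castLE hrn t) := Finset.sum_map _ _ f
  rw [← h2]
  refine (Finset.sum_subset (Finset.subset_univ _) ?_).symm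
  intro x _ hx
  refine hf x (le_of_not_gt fun h => hx ?_)
  exact Finset.mem_map.mpr ⟨⟨x, h⟩, Finset.mem_univ _, rfl⟩

/-- Block lower triangular predicate: entries with row index `< r` and column index `≥ r`
vanish. -/
private def Tri (r : ℕ) (M : Matrix (Fin n) (Fin n) ℤ) : Prop :=
  ∀ i j : Fin n, (i : ℕ) < r → r ≤ (j : ℕ) → M i j = 0

/-- Top-left `r × r` block. -/
private def phi (hrn : r ≤ n) (M : Matrix (Fin n) (Fin n) ℤ) : Matrix (Fin r) (Fin r) ℤ :=
  M.submatrix (Fin.castLE hrn) (Fin.castLE hrn)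

private lemma tri_mul (hrn : r ≤ n) {M N : Matrix (Fin n) (Fin n) ℤ}
    (hM : Tri r M) (hN : Tri r N) : Tri r (M * N) := by
  intro i j hi hj
  rw [Matrix.mul_apply]
  refine Finset.sum_eq_zero fun t _ => ?_
  rcases lt_or_ge (t : ℕ) r with ht | ht
  · rw [hN t j ht hj, mul_zero]
  · rw [hM i t hi ht, zero_mul]

private lemma phi_mul (hrn : r ≤ n) {M N : Matrix (Fin n) (Fin n) ℤ}
    (hM : Tri r M) : phi hrn (M * N) = phi hrn M * phi hrn N := by
  ext i j
  show (M * N) (Fin.castLE hrn i) (Fin.castLE hrn j) = _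
  rw [Matrix.mul_apply]
  rw [sum_eq_castLE hrn (fun t => M (Fin.castLE hrn i) t * N t (Fin.castLE hrn j))
      (fun t ht => by
        show M (Fin.castLE hrn i) t * N t (Fin.castLE hrn j) = 0
        rw [hM _ t i.isLt ht, zero_mul])]
  rw [Matrix.mul_apply]
  rfl

private lemma tri_phi_pow (hrn : r ≤ n) {C : Matrix (Fin n) (Fin n) ℤ} (hC : Tri r C) (k : ℕ) :
    Tri r (C ^ k) ∧ phi hrn (C ^ k) = (phi hrn C) ^ k := by
  induction k with
  | zero =>
    constructor
    · intro i j hi hj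
      rw [pow_zero, Matrix.one_apply_ne (Fin.ne_of_val_ne (by omega))]
    · rw [pow_zero, pow_zero]
      exact Matrix.submatrix_one _ (Fin.castLE_injective hrn)
  | succ k ih =>
    rw [pow_succ, pow_succ]
    exact ⟨tri_mul hrn ih.1 hC, by rw [phi_mul hrn ih.1, ih.2]⟩

private lemma tri_phi_aeval (hrn : r ≤ n) {C : Matrix (Fin n) (Fin n) ℤ} (hC : Tri r C)
    (p : ℤ[X]) : Tri r (aeval C p) ∧ phi hrn (aeval C p) = aeval (phi hrn C) p := by
  induction p using Polynomial.induction_on' with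
  | add p q hp hq =>
    rw [_root_.map_add, map_add]
    refine ⟨fun i j hi hj => ?_, ?_⟩
    · rw [Matrix.add_apply, hp.1 i j hi hj, hq.1 i j hi hj, add_zero]
    · rw [← hp.2, ← hq.2]
      rfl
  | monomial k a =>
    rw [aeval_monomial, aeval_monomial, ← Algebra.smul_def, ← Algebra.smul_def]
    obtain ⟨h1, h2⟩ := tri_phi_pow hrn hC k
    refine ⟨fun i j hi hj => ?_, ?_⟩
    · rw [Matrix.smul_apply, h1 i j hi hj, smul_zero]
    · rw [← h2]
      rfl

/-- If `|det M| = 1` for an integer matrix `M`, then `M` has a polynomial inverse. -/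
private lemma exists_poly_inverse {r : ℕ} (M : Matrix (Fin r) (Fin r) ℤ)
    (h : M.det.natAbs = 1) : ∃ q : ℤ[X], M * aeval M q = 1 := by
  set ε := M.charpoly.coeff 0 with hε
  have habs : ε.natAbs = 1 := by
    have hd := congrArg Int.natAbs (Matrix.det_eq_sign_charpoly_coeff M)
    simp only [Int.natAbs_mul, Int.natAbs_pow, Int.natAbs_neg, Int.natAbs_one, one_pow,
      one_mul, ← hε] at hd
    rw [← hd]
    exact h
  have hee : ε * ε = 1 := by
    rcases Int.natAbs_eq_iff.mp habs with h' | h' <;> rw [h'] <;> norm_num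
  have hch := M.aeval_self_charpoly
  rw [← divX_mul_X_add M.charpoly, _root_.map_add, _root_.map_mul, aeval_X, aeval_C, ← hε] at hch
  have hMq : M * aeval M (divX M.charpoly) = aeval M (divX M.charpoly) * M := by
    calc M * aeval M (divX M.charpoly) = aeval M (X * divX M.charpoly) := by
          rw [_root_.map_mul, aeval_X]
      _ = aeval M (divX M.charpoly * X) := by rw [mul_comm]
      _ = aeval M (divX M.charpoly) * M := by rw [_root_.map_mul, aeval_X]
  refine ⟨Polynomial.C (-ε) * divX M.charpoly, ?_⟩
  rw [_root_.map_mul, aeval_C, ← Algebra.smul_def, mul_smul_comm, hMq,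
    eq_neg_of_add_eq_zero_left hch, smul_neg, neg_smul, neg_neg, Algebra.smul_def,
    ← _root_.map_mul, hee, _root_.map_one]

end Aux

/-- Let `A` be an `n×n` integer matrix with `det A ≠ 0` and `⋂_{k≥1} im Aᵏ = 0`. If `B` is
invertible over `ℤ` and `B·A·B⁻¹` is block lower triangular with top-left `r×r` block `A₁`
(`1 ≤ r ≤ n`), then `|det A₁| > 1`. -/
theorem abs_det_block_gt_one
    (n r : ℕ) (hr : 1 ≤ r) (hrn : r ≤ n)
    (A B : Matrix (Fin n) (Fin n) ℤ)
    (hdet : A.det ≠ 0)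
    (hA : (⋂ k : ℕ, Set.range ((A ^ (k + 1)).mulVec)) = {0})
    (hB : IsUnit B.det)
    (htri : ∀ i j : Fin n, (i : ℕ) < r → r ≤ (j : ℕ) → (B * A * B⁻¹) i j = 0) :
    1 < (Matrix.det (Matrix.of fun i j : Fin r =>
        (B * A * B⁻¹) (Fin.castLE hrn i) (Fin.castLE hrn j))).natAbs := by
  by_contra hcon
  push_neg at hcon
  set C : Matrix (Fin n) (Fin n) ℤ := B * A * B⁻¹ with hCdef
  set A₁ : Matrix (Fin r) (Fin r) ℤ :=
    Matrix.of (fun i j : Fin r => C (Fin.castLE hrn i) (Fin.castLE hrn j)) with hA₁def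
  have hphiC : phi hrn C = A₁ := rfl
  have hBB : B * B⁻¹ = 1 := Matrix.mul_nonsing_inv B hB
  have hB'B : B⁻¹ * B = 1 := Matrix.nonsing_inv_mul B hB
  have hTriC : Tri r C := fun i j hi hj => htri i j hi hj
  have hdetC : C.det = A.det := by
    have h1 : B.det * B⁻¹.det = 1 := by rw [← Matrix.det_mul, hBB, Matrix.det_one]
    calc C.det = B.det * A.det * B⁻¹.det := by rw [hCdef, Matrix.det_mul, Matrix.det_mul]
      _ = A.det * (B.det * B⁻¹.det) := by ring
      _ = A.det := by rw [h1, mul_one]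
  have hCk : ∀ k : ℕ, C ^ k = B * A ^ k * B⁻¹ := by
    intro k
    induction k with
    | zero => rw [pow_zero, pow_zero, Matrix.mul_one, hBB]
    | succ k ih =>
      calc C ^ (k + 1) = C ^ k * C := pow_succ C k
        _ = B * A ^ k * B⁻¹ * (B * A * B⁻¹) := by rw [ih]
        _ = B * A ^ (k + 1) * B⁻¹ := by
            rw [pow_succ]
            simp only [← Matrix.mul_assoc]
            rw [Matrix.mul_assoc (B * A ^ k) B⁻¹ B, hB'B, Matrix.mul_one]
  rcases Nat.le_one_iff_eq_zero_or_eq_one.mp hcon with h0 | h1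
  · -- case |det A₁| = 0 : contradiction with det A ≠ 0
    have hd : A₁.det = 0 := Int.natAbs_eq_zero.mp h0
    obtain ⟨w, hw0, hw⟩ := Matrix.exists_vecMul_eq_zero_iff.mpr hd
    set w' : Fin n → ℤ := fun i => if h : (i : ℕ) < r then w ⟨i, h⟩ else 0 with hw'def
    have hw'1 : ∀ i : Fin r, w' (Fin.castLE hrn i) = w i := fun i => dif_pos i.isLt
    have hw'2 : ∀ t : Fin n, r ≤ (t : ℕ) → w' t = 0 := fun t ht => dif_neg (not_lt.mpr ht)
    have hw'C : w' ᵥ* C = 0 := by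
      funext j
      show (∑ i, w' i * C i j) = 0
      rw [sum_eq_castLE hrn _ (fun t ht => by rw [hw'2 t ht, zero_mul])]
      rcases lt_or_ge (j : ℕ) r with hj | hj
      · have hhw := congrFun hw ⟨j, hj⟩
        simp only [Matrix.vecMul, dotProduct, Pi.zero_apply] at hhw
        calc (∑ i : Fin r, w' (Fin.castLE hrn i) * C (Fin.castLE hrn i) j)
            = ∑ i : Fin r, w i * A₁ i ⟨j, hj⟩ := by
              refine Finset.sum_congr rfl fun i _ => ?_
              rw [hw'1 i]
              rfl
          _ = 0 := hhw
      · refine Finset.sum_eq_zero fun i _ => ?_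
        rw [hTriC _ j i.isLt hj, mul_zero]
    have hw'0 : w' ≠ 0 := by
      obtain ⟨i, hi⟩ := Function.ne_iff.mp hw0
      intro hcontra
      apply hi
      have := congrFun hcontra (Fin.castLE hrn i)
      rwa [hw'1 i] at this
    have : C.det = 0 := Matrix.exists_vecMul_eq_zero_iff.mp ⟨w', hw'0, hw'C⟩
    rw [hdetC] at this
    exact hdet this
  · -- case |det A₁| = 1 : contradiction with ⋂ im Aᵏ = 0
    obtain ⟨q, hq⟩ := exists_poly_inverse A₁ h1
    obtain ⟨TriD, phiD⟩ := tri_phi_aeval hrn hTriC q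
    rw [hphiC] at phiD
    have TriE : Tri r (C * aeval C q) := tri_mul hrn hTriC TriD
    have phiE : phi hrn (C * aeval C q) = 1 := by
      rw [phi_mul hrn hTriC, hphiC, phiD, hq]
    -- the matrix C * aeval C q - 1 has a zero row, hence zero determinant
    have hi0 : ((Fin.castLE hrn ⟨0, hr⟩ : Fin n) : ℕ) = 0 := rfl
    have hrowzero : ∀ j : Fin n, (C * aeval C q - 1) (Fin.castLE hrn ⟨0, hr⟩) j = 0 := by
      intro j
      rw [Matrix.sub_apply]
      rcases lt_or_ge (j : ℕ) r with hj | hj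
      · have h1' : (C * aeval C q) (Fin.castLE hrn ⟨0, hr⟩) j
            = (1 : Matrix (Fin r) (Fin r) ℤ) ⟨0, hr⟩ ⟨j, hj⟩ := by
          rw [← phiE]
          rfl
        by_cases h : (j : ℕ) = 0
        · have e1 : (⟨0, hr⟩ : Fin r) = ⟨j, hj⟩ := Fin.ext (by simp [h])
          have e2 : Fin.castLE hrn ⟨0, hr⟩ = j := Fin.ext (by simp [h])
          rw [h1', Matrix.one_apply, Matrix.one_apply, if_pos e1, if_pos e2, sub_self]
        · have e1 : (⟨0, hr⟩ : Fin r) ≠ ⟨j, hj⟩ :=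
            fun hc => h (by simpa using (congrArg Fin.val hc).symm)
          have e2 : Fin.castLE hrn ⟨0, hr⟩ ≠ j :=
            fun hc => h (by simpa using (congrArg Fin.val hc).symm)
          rw [h1', Matrix.one_apply, Matrix.one_apply, if_neg e1, if_neg e2, sub_self]
      · rw [TriE (Fin.castLE hrn ⟨0, hr⟩) j (show (0 : ℕ) < r from hr) hj,
          Matrix.one_apply_ne (Fin.ne_of_val_ne (show (0 : ℕ) ≠ (j : ℕ) by omega)), sub_zero]
    have hdetE : (C * aeval C q - 1).det = 0 :=
      Matrix.det_eq_zero_of_row_eq_zero _ hrowzero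
    obtain ⟨v, hv0, hv⟩ := Matrix.exists_mulVec_eq_zero_iff.mpr hdetE
    have hEv : (C * aeval C q) *ᵥ v = v := by
      rwa [Matrix.sub_mulVec, Matrix.one_mulVec, sub_eq_zero] at hv
    have hEk : ∀ k : ℕ, (C * aeval C q) ^ k *ᵥ v = v := by
      intro k
      induction k with
      | zero => rw [pow_zero, Matrix.one_mulVec]
      | succ k ih =>
        rw [pow_succ, ← Matrix.mulVec_mulVec, hEv, ih]
    have hcd : Commute C (aeval C q) := by
      show C * aeval C q = aeval C q * C
      calc C * aeval C q = aeval C (X * q) := by rw [_root_.map_mul, aeval_X]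
        _ = aeval C (q * X) := by rw [mul_comm]
        _ = aeval C q * C := by rw [_root_.map_mul, aeval_X]
    have hvk : ∀ k : ℕ, v = (C ^ k) *ᵥ ((aeval C q ^ k) *ᵥ v) := by
      intro k
      have h' := hEk k
      rw [hcd.mul_pow, ← Matrix.mulVec_mulVec] at h'
      exact h'.symm
    have hmem : B⁻¹ *ᵥ v ∈ ⋂ k : ℕ, Set.range ((A ^ (k + 1)).mulVec) := by
      refine Set.mem_iInter.mpr fun k => ⟨B⁻¹ *ᵥ ((aeval C q ^ (k + 1)) *ᵥ v), ?_⟩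
      show (A ^ (k + 1)) *ᵥ (B⁻¹ *ᵥ ((aeval C q ^ (k + 1)) *ᵥ v)) = B⁻¹ *ᵥ v
      conv_rhs => rw [hvk (k + 1)]
      simp only [Matrix.mulVec_mulVec]
      congr 1
      rw [hCk (k + 1)]
      simp only [← Matrix.mul_assoc]
      rw [hB'B, Matrix.one_mul]
    rw [hA] at hmem
    have hv0' : B⁻¹ *ᵥ v = 0 := hmem
    have hvz : v = 0 := by
      have h' := congrArg (fun x => B *ᵥ x) hv0'
      simp only [Matrix.mulVec_mulVec, hBB, Matrix.one_mulVec, Matrix.mulVec_zero] at h'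
      exact h'
    exact hv0 hvz
end

section
/- The group Q(2,3) is not finitely presented: there exist no natural number n and no finite set of relators rels ⊆ FreeGroup(Fin n) such that Q(2,3) is isomorphic to the presented group on n generators with relators rels. -/
open Multiplicative
open scoped commutatorElement

/-- `ℤ[1/6]` as an additive subgroup of `ℚ`. -/
def Z16 : AddSubgroup ℚ where
  carrier := {q : ℚ | ∃ (m : ℤ) (k : ℕ), q = m / 6 ^ k}
  zero_mem' := ⟨0, 0, by norm_num⟩
  add_mem' := by
    rintro a b ⟨m, k, rfl⟩ ⟨m', k', rfl⟩
    refine ⟨m * 6 ^ k' + m' * 6 ^ k, k + k', ?_⟩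
    push_cast
    rw [pow_add]
    field_simp
  neg_mem' := by
    rintro a ⟨m, k, rfl⟩
    exact ⟨-m, k, by push_cast; ring⟩

/-- Multiplication by `3/2` as an additive automorphism of `ℤ[1/6]`. -/
def mul32 : Z16 ≃+ Z16 where
  toFun q := ⟨(3 / 2 : ℚ) * q, by
    obtain ⟨m, k, hq⟩ := q.2
    refine ⟨9 * m, k + 1, ?_⟩
    rw [hq]; push_cast; rw [pow_succ]; field_simp; ring⟩
  invFun q := ⟨(2 / 3 : ℚ) * q, by
    obtain ⟨m, k, hq⟩ := q.2
    refine ⟨4 * m, k + 1, ?_⟩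
    rw [hq]; push_cast; rw [pow_succ]; field_simp; ring⟩
  left_inv q := Subtype.ext (by
    show (2 / 3 : ℚ) * ((3 / 2 : ℚ) * (q : ℚ)) = (q : ℚ)
    ring)
  right_inv q := Subtype.ext (by
    show (3 / 2 : ℚ) * ((2 / 3 : ℚ) * (q : ℚ)) = (q : ℚ)
    ring)
  map_add' a b := Subtype.ext (by push_cast; ring)

/-- The action of `ℤ` on `ℤ[1/6]` in which `1` acts by multiplication by `3/2`. -/
def phiQ : Multiplicative ℤ →* MulAut (Multiplicative Z16) :=
  zpowersHom (MulAut (Multiplicative Z16)) (AddEquiv.toMultiplicative mul32)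

/-- The group `Q(2,3) = ℤ[1/6] ⋊ ℤ`, where the generator `1 ∈ ℤ` acts on `ℤ[1/6]` by
multiplication by `3/2`. -/
abbrev Q23 : Type := SemidirectProduct (Multiplicative Z16) (Multiplicative ℤ) phiQ

/-- The element `(1, 0)` of `Q(2,3)`. -/
def Qa : Q23 := SemidirectProduct.inl (ofAdd (⟨1, 1, 0, by norm_num⟩ : Z16))

/-- The element `(0, 1)` of `Q(2,3)`. -/
def Qt : Q23 := SemidirectProduct.inr (ofAdd (1 : ℤ))

/-- The single relator `t a² t⁻¹ a⁻³` of the Baumslag–Solitar group `BS(2,3)`,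
with generator `0` playing the role of `a` and generator `1` the role of `t`. -/
def BSrels : Set (FreeGroup (Fin 2)) :=
  {FreeGroup.of 1 * FreeGroup.of 0 ^ 2 * (FreeGroup.of 1)⁻¹ * (FreeGroup.of 0 ^ 3)⁻¹}

/-- The Baumslag–Solitar group `BS(2,3) = ⟨a, t ∣ t a² t⁻¹ = a³⟩`. -/
abbrev BS23 : Type := PresentedGroup BSrels

/-- The generator `a` of `BS(2,3)`. -/
def BSa : BS23 := PresentedGroup.of 0

/-- The generator `t` of `BS(2,3)`. -/
def BSt : BS23 := PresentedGroup.of 1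

-- chunk 1: definitions and Q23-side computations
namespace Q23NFP

abbrev F2 := FreeGroup (Fin 2)
def fa : F2 := FreeGroup.of 0
def ft : F2 := FreeGroup.of 1
def r0 : F2 := ft * fa ^ 2 * ft⁻¹ * (fa ^ 3)⁻¹
def crel (n : ℕ) : F2 := ⁅fa, ft ^ n * fa * (ft ^ n)⁻¹⁆
def Rel (N : ℕ) : Set F2 := {r0} ∪ crel '' {n | 1 ≤ n ∧ n ≤ N}
def Relinf : Set F2 := {r0} ∪ crel '' {n | 1 ≤ n}

lemma Rel_mono : Monotone (fun N => Rel N) := by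
  intro N M h
  apply Set.union_subset_union_right
  exact Set.image_mono (fun n hn => ⟨hn.1, le_trans hn.2 h⟩)

def e1 : Z16 := ⟨1, 1, 0, by norm_num⟩

noncomputable def pi : F2 →* Q23 := FreeGroup.lift (fun i => if i = 0 then Qa else Qt)

@[simp] lemma pi_fa : pi fa = Qa := by simp [pi, fa]
@[simp] lemma pi_ft : pi ft = Qt := by simp [pi, ft]

lemma Qa_def : Qa = SemidirectProduct.inl (ofAdd e1) := rfl
lemma Qt_def : Qt = SemidirectProduct.inr (ofAdd (1 : ℤ)) := rfl

lemma phiQ_one_apply (v : Z16) :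
    phiQ (ofAdd (1:ℤ)) (ofAdd v) = ofAdd (mul32 v) := by
  show (zpowersHom (MulAut (Multiplicative Z16)) (AddEquiv.toMultiplicative mul32)) (ofAdd (1:ℤ)) (ofAdd v) = _
  rw [zpowersHom_apply]
  rfl

lemma mul32_coe (v : Z16) : ((mul32 v : Z16) : ℚ) = 3/2 * v := rfl

lemma mul32_symm_coe (v : Z16) : ((mul32.symm v : Z16) : ℚ) = 2/3 * v := rfl

end Q23NFP

namespace Q23NFP
open SemidirectProduct

lemma phiQ_inv_one_apply (v : Z16) :
    (phiQ (ofAdd (1:ℤ)))⁻¹ (ofAdd v) = ofAdd (mul32.symm v) := by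
  have h : phiQ (ofAdd (1:ℤ)) (ofAdd (mul32.symm v)) = ofAdd v := by
    rw [phiQ_one_apply, AddEquiv.apply_symm_apply]
  calc (phiQ (ofAdd (1:ℤ)))⁻¹ (ofAdd v)
      = (phiQ (ofAdd (1:ℤ)))⁻¹ (phiQ (ofAdd (1:ℤ)) (ofAdd (mul32.symm v))) := by rw [h]
    _ = ofAdd (mul32.symm v) := by
        rw [← MulAut.mul_apply, inv_mul_cancel]; rfl

lemma Qt_conj (v : Z16) :
    Qt * inl (ofAdd v) * Qt⁻¹ = inl (ofAdd (mul32 v)) := by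
  rw [Qt_def, ← phiQ_one_apply, ← map_inv, inl_aut]

lemma Qt_conj' (v : Z16) :
    Qt⁻¹ * inl (ofAdd v) * Qt = inl (ofAdd (mul32.symm v)) := by
  rw [Qt_def, ← phiQ_inv_one_apply, ← map_inv, inl_aut_inv]

lemma inl_commute (x y : Multiplicative Z16) :
    Commute (inl (φ := phiQ) x) (inl y) := (Commute.all x y).map inl

lemma Qt_pow_conj (g : Multiplicative ℤ) (x : Multiplicative Z16) :
    inr (φ := phiQ) g * inl x * (inr g)⁻¹ = inl (phiQ g x) := by
  rw [← map_inv, inl_aut]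

lemma pi_r0 : pi r0 = 1 := by
  have e1_coe : ((e1 : Z16) : ℚ) = 1 := rfl
  have h2 : (Qa : Q23)^2 = inl (ofAdd (e1 + e1)) := by
    rw [Qa_def, sq, ← map_mul]; rfl
  have h3 : (Qa : Q23)^3 = inl (ofAdd (e1 + e1 + e1)) := by
    rw [Qa_def, pow_succ, sq, ← map_mul, ← map_mul]; rfl
  have harg : mul32 (e1 + e1) = e1 + e1 + e1 := by
    apply Subtype.ext
    rw [mul32_coe]
    push_cast [e1_coe]
    norm_num
  have key : Qt * Qa^2 * Qt⁻¹ = Qa^3 := by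
    rw [h2, h3, Qt_conj, harg]
  rw [r0, map_mul, map_mul, map_mul, map_inv, map_inv, map_pow, map_pow, pi_fa, pi_ft]
  rw [← key]
  group

lemma pi_crel (n : ℕ) : pi (crel n) = 1 := by
  rw [crel, map_commutatorElement]
  rw [map_mul, map_mul, map_inv, map_pow, pi_fa, pi_ft]
  have hq : (Qt : Q23)^n = inr (ofAdd (1:ℤ) ^ n) := by
    rw [Qt_def, map_pow]
  rw [hq, Qa_def, Qt_pow_conj]
  exact commutatorElement_eq_one_iff_commute.mpr (inl_commute _ _)

lemma Relinf_sub_ker : Relinf ⊆ pi.ker := by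
  rintro x (rfl | ⟨n, -, rfl⟩)
  · exact pi_r0
  · exact pi_crel n

end Q23NFP

namespace Q23NFP

abbrev KN (N : ℕ) : Subgroup F2 := Subgroup.normalClosure (Rel N)
abbrev Kinf : Subgroup F2 := Subgroup.normalClosure Relinf

abbrev G : Type := F2 ⧸ Kinf
def gmk : F2 →* G := QuotientGroup.mk' Kinf
def ga : G := gmk fa
def gt : G := gmk ft

/-- conjugation by `gt ^ i` -/
def cj (i : ℤ) (x : G) : G := gt ^ i * x * (gt ^ i)⁻¹

lemma cj_mul (i : ℤ) (x y : G) : cj i (x * y) = cj i x * cj i y := by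
  unfold cj; group

lemma cj_inv (i : ℤ) (x : G) : cj i x⁻¹ = (cj i x)⁻¹ := by
  unfold cj; group

lemma cj_zero (x : G) : cj 0 x = x := by unfold cj; group

lemma cj_cj (i j : ℤ) (x : G) : cj i (cj j x) = cj (i + j) x := by
  unfold cj
  rw [zpow_add]
  group

lemma cj_pow (i : ℤ) (x : G) (n : ℕ) : cj i (x ^ n) = (cj i x) ^ n := by
  induction n with
  | zero => simp [cj]
  | succ n ih => rw [pow_succ, cj_mul, ih, pow_succ]

lemma cj_zpow (i : ℤ) (x : G) (n : ℤ) : cj i (x ^ n) = (cj i x) ^ n := by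
  unfold cj
  rw [conj_zpow]

lemma cj_one_eq (x : G) : cj 1 x = gt * x * gt⁻¹ := by
  unfold cj; rw [zpow_one]

lemma commute_cj (i : ℤ) {x y : G} (h : Commute x y) : Commute (cj i x) (cj i y) := by
  unfold cj
  exact (h.map (MulAut.conj (gt ^ i)).toMonoidHom :)

-- relations in G
lemma gmk_rel_one {x : F2} (h : x ∈ Relinf) : gmk x = 1 := by
  have hm : x ∈ (QuotientGroup.mk' Kinf).ker := by
    rw [QuotientGroup.ker_mk']
    exact Subgroup.subset_normalClosure h
  exact hm

lemma g_r0 : gt * ga ^ 2 * gt⁻¹ = ga ^ 3 := by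
  have h := gmk_rel_one (Set.mem_union_left _ rfl)
  rw [r0] at h
  simp only [map_mul, map_inv, map_pow] at h
  rw [mul_inv_eq_one] at h
  exact h

lemma g_crel {n : ℕ} (hn : 1 ≤ n) : Commute ga (cj n ga) := by
  have h := gmk_rel_one (Set.mem_union_right _ ⟨n, hn, rfl⟩)
  rw [crel, map_commutatorElement] at h
  simp only [map_mul, map_inv, map_pow] at h
  rw [commutatorElement_eq_one_iff_commute] at h
  have hc : cj (n : ℤ) ga = gt ^ n * ga * (gt ^ n)⁻¹ := by
    unfold cj; rw [zpow_natCast]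
  rw [hc]
  exact h

lemma cj_ga_commute : ∀ i j : ℤ, Commute (cj i ga) (cj j ga) := by
  have base : ∀ m : ℤ, 0 ≤ m → Commute ga (cj m ga) := by
    intro m hm
    rcases eq_or_lt_of_le hm with h | h
    · rw [← h, cj_zero]
    · lift m to ℕ using hm
      have : 1 ≤ m := by exact_mod_cast h
      exact g_crel this
  intro i j
  rcases le_total i j with h | h
  · have := commute_cj i (base (j - i) (by omega))
    rwa [cj_cj, add_sub_cancel] at this
  · have := commute_cj j (base (i - j) (by omega))
    rw [cj_cj, add_sub_cancel] at this
    exact this.symm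

end Q23NFP

namespace Q23NFP

section KeyAlgebra

variable {H : Type*} [Group H] {x y z : H}

/-- In any group, if `x, y, z` pairwise commute, `y² = x³` and `z² = y³`,
then `w := z x y⁻²` satisfies `w⁶ = y`, `w⁹ = z`, `w² = x² y⁻¹`. -/
lemma key_pow6 (hxy : Commute x y) (hxz : Commute x z) (hyz : Commute y z)
    (h1 : y ^ 2 = x ^ 3) (h2 : z ^ 2 = y ^ 3) :
    (z * x * (y⁻¹) ^ 2) ^ 6 = y := by
  have c1 : Commute (z * x) ((y⁻¹) ^ 2) :=
    ((hyz.symm.inv_right).mul_left (hxy.inv_right)).pow_right 2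
  have c2 : Commute z x := hxz.symm
  rw [c1.mul_pow, c2.mul_pow, ← pow_mul]
  norm_num
  have hz6 : z ^ 6 = y ^ 9 := by
    have : z ^ 6 = (z ^ 2) ^ 3 := by rw [← pow_mul]
    rw [this, h2, ← pow_mul]
  have hx6 : x ^ 6 = y ^ 4 := by
    have : x ^ 6 = (x ^ 3) ^ 2 := by rw [← pow_mul]
    rw [this, ← h1, ← pow_mul]
  rw [hz6, hx6]
  group

lemma key_pow9 (hxy : Commute x y) (hxz : Commute x z) (hyz : Commute y z)
    (h1 : y ^ 2 = x ^ 3) (h2 : z ^ 2 = y ^ 3) :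
    (z * x * (y⁻¹) ^ 2) ^ 9 = z := by
  have c1 : Commute (z * x) ((y⁻¹) ^ 2) :=
    ((hyz.symm.inv_right).mul_left (hxy.inv_right)).pow_right 2
  have c2 : Commute z x := hxz.symm
  rw [c1.mul_pow, c2.mul_pow, ← pow_mul]
  norm_num
  have hz9 : z ^ 9 = z * y ^ 12 := by
    have : z ^ 9 = z * (z ^ 2) ^ 4 := by rw [← pow_mul]; group
    rw [this, h2, ← pow_mul]
  have hx9 : x ^ 9 = y ^ 6 := by
    have : x ^ 9 = (x ^ 3) ^ 3 := by rw [← pow_mul]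
    rw [this, ← h1, ← pow_mul]
  rw [hz9, hx9]
  have hy : Commute z (y ^ 12 * y ^ 6) := (hyz.symm.pow_right 12).mul_right (hyz.symm.pow_right 6)
  calc z * y ^ 12 * y ^ 6 * (y ^ 18)⁻¹ = z * (y ^ 12 * y ^ 6) * (y ^ 18)⁻¹ := by group
    _ = z := by rw [← pow_add]; norm_num

lemma key_pow2 (hxy : Commute x y) (hxz : Commute x z) (hyz : Commute y z)
    (h1 : y ^ 2 = x ^ 3) (h2 : z ^ 2 = y ^ 3) :
    (z * x * (y⁻¹) ^ 2) ^ 2 = x ^ 2 * y⁻¹ := by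
  have c1 : Commute (z * x) ((y⁻¹) ^ 2) :=
    ((hyz.symm.inv_right).mul_left (hxy.inv_right)).pow_right 2
  have c2 : Commute z x := hxz.symm
  rw [c1.mul_pow, c2.mul_pow, ← pow_mul]
  norm_num
  rw [h2]
  have : y ^ 3 * x ^ 2 = x ^ 2 * y ^ 3 := ((hxy.symm.pow_pow 3 2))
  rw [this]
  group

end KeyAlgebra

/-- The elements representing `1/6^k`. -/
def bb : ℕ → G
  | 0 => ga
  | (k+1) => cj 1 (bb k) * cj (-1) (bb k) * ((bb k)⁻¹) ^ 2

lemma bb_main : ∀ k : ℕ,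
    (∀ i j : ℤ, Commute (cj i (bb k)) (cj j (bb k))) ∧
      gt * (bb k) ^ 2 * gt⁻¹ = (bb k) ^ 3 := by
  intro k
  induction k with
  | zero => exact ⟨cj_ga_commute, g_r0⟩
  | succ k ih =>
    obtain ⟨hc, hbs⟩ := ih
    set B := bb k with hB
    -- basic conjugation facts
    have hX : ∀ i : ℤ, cj i (cj (-1) B) = cj (i - 1) B := by
      intro i; rw [cj_cj]; ring_nf
    have hZ : ∀ i : ℤ, cj i (cj 1 B) = cj (i + 1) B := by
      intro i; rw [cj_cj]
    have hY : ∀ i : ℤ, cj i B = cj (i + 0) B := by intro i; rw [add_zero]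
    -- commutation of all conjugates of bb (k+1)
    have hcomm' : ∀ i j : ℤ, Commute (cj i (bb (k+1))) (cj j B) := by
      intro i j
      show Commute (cj i (cj 1 B * cj (-1) B * ((B)⁻¹) ^ 2)) _
      rw [cj_mul, cj_mul, cj_pow, cj_inv, hZ, hX]
      exact (((hc _ _).mul_left (hc _ _)).mul_left (((hc _ _).inv_left).pow_left 2)).symm.symm
    have hcomm : ∀ i j : ℤ, Commute (cj i (bb (k+1))) (cj j (bb (k+1))) := by
      intro i j
      have expand : cj j (bb (k+1)) = cj (j+1) B * cj (j-1) B * ((cj j B)⁻¹) ^ 2 := by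
        show cj j (cj 1 B * cj (-1) B * ((B)⁻¹) ^ 2) = _
        rw [cj_mul, cj_mul, cj_pow, cj_inv, hZ, hX]
      rw [expand]
      exact (((hcomm' i _).mul_right (hcomm' i _)).mul_right
        (((hcomm' i j).inv_right).pow_right 2))
    refine ⟨hcomm, ?_⟩
    -- BS relation for bb (k+1)
    have hX1 : cj (-1) B = gt⁻¹ * B * gt := by
      unfold cj; rw [zpow_neg, zpow_one, inv_inv]
    have h1 : B ^ 2 = (cj (-1) B) ^ 3 := by
      have e : cj (-1) (B ^ 3) = (cj (-1) B) ^ 3 := cj_pow _ _ 3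
      rw [← e, ← hbs]
      unfold cj
      rw [zpow_neg, zpow_one, inv_inv]
      group
    have h2 : (cj 1 B) ^ 2 = B ^ 3 := by
      rw [← cj_pow, cj_one_eq, hbs]
    -- identify bb (k+1) with the algebra lemma's w,  x := cj (-1) B, y := B, z := cj 1 B
    have hxy : Commute (cj (-1) B) B := by
      have := hc (-1) 0; rwa [cj_zero] at this
    have hxz : Commute (cj (-1) B) (cj 1 B) := hc _ _
    have hyz : Commute B (cj 1 B) := by
      have := hc 0 1; rwa [cj_zero] at this
    have hw : bb (k+1) = cj 1 B * cj (-1) B * ((B)⁻¹) ^ 2 := rfl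
    have hp2 : (bb (k+1)) ^ 2 = (cj (-1) B) ^ 2 * B⁻¹ := by
      rw [hw]; exact key_pow2 hxy hxz hyz h1 h2
    have hp9 : (bb (k+1)) ^ 9 = cj 1 B := by
      rw [hw]; exact key_pow9 hxy hxz hyz h1 h2
    have hp6 : (bb (k+1)) ^ 6 = B := by
      rw [hw]; exact key_pow6 hxy hxz hyz h1 h2
    have hp3 : (bb (k+1)) ^ 3 = cj 1 B * B⁻¹ := by
      have h9' : cj 1 B = (bb (k+1)) ^ 3 * B := by
        rw [← hp9, ← hp6, ← pow_add]
      rw [h9']; group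
    rw [hp2, hp3]
    have hLHS : gt * ((cj (-1) B) ^ 2 * B⁻¹) * gt⁻¹ = B ^ 2 * (cj 1 B)⁻¹ := by
      have e : gt * ((cj (-1) B) ^ 2 * B⁻¹) * gt⁻¹ = cj 1 ((cj (-1) B) ^ 2 * B⁻¹) := by
        rw [cj_one_eq]
      rw [e, cj_mul, cj_pow, cj_inv, cj_cj]
      norm_num [cj_zero]
    rw [hLHS]
    calc B ^ 2 * (cj 1 B)⁻¹
        = B⁻¹ * (B ^ 3 * (cj 1 B)⁻¹) := by group
      _ = B⁻¹ * ((cj 1 B) ^ 2 * (cj 1 B)⁻¹) := by rw [h2]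
      _ = B⁻¹ * cj 1 B := by group
      _ = cj 1 B * B⁻¹ := hyz.inv_left.eq
end Q23NFP

namespace Q23NFP

lemma bb_step (k : ℕ) : (bb (k+1)) ^ 6 = bb k ∧ (bb (k+1)) ^ 9 = cj 1 (bb k) := by
  obtain ⟨hc, hbs⟩ := bb_main k
  set B := bb k with hB
  have h1 : B ^ 2 = (cj (-1) B) ^ 3 := by
    have e : cj (-1) (B ^ 3) = (cj (-1) B) ^ 3 := cj_pow _ _ 3
    rw [← e, ← hbs]
    unfold cj
    rw [zpow_neg, zpow_one, inv_inv]
    group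
  have h2 : (cj 1 B) ^ 2 = B ^ 3 := by
    rw [← cj_pow, cj_one_eq, hbs]
  have hxy : Commute (cj (-1) B) B := by
    have := hc (-1) 0; rwa [cj_zero] at this
  have hxz : Commute (cj (-1) B) (cj 1 B) := hc _ _
  have hyz : Commute B (cj 1 B) := by
    have := hc 0 1; rwa [cj_zero] at this
  have hw : bb (k+1) = cj 1 B * cj (-1) B * ((B)⁻¹) ^ 2 := rfl
  constructor
  · rw [hw]; exact key_pow6 hxy hxz hyz h1 h2
  · rw [hw]; exact key_pow9 hxy hxz hyz h1 h2

lemma bb_pow6 (k : ℕ) : (bb (k+1)) ^ 6 = bb k := (bb_step k).1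

lemma bb_conj (k : ℕ) : gt * bb k * gt⁻¹ = (bb (k+1)) ^ 9 := by
  rw [(bb_step k).2, cj_one_eq]

lemma bb_pow6d (k d : ℕ) : (bb (k+d)) ^ ((6:ℕ) ^ d) = bb k := by
  induction d with
  | zero => rw [Nat.add_zero, pow_zero, pow_one]
  | succ d ih =>
    have : (6:ℕ) ^ (d+1) = 6 * 6 ^ d := by ring
    rw [show k + (d+1) = (k+d) + 1 from rfl, this, pow_mul, bb_pow6, ih]

lemma bpow_aux {m m' : ℤ} {k d : ℕ} (h : (m:ℚ)/6^k = (m':ℚ)/6^(k+d)) :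
    bb k ^ m = bb (k+d) ^ m' := by
  have hint : m' = m * 6 ^ d := by
    have h6 : ((6:ℚ))^k ≠ 0 := by positivity
    have h6' : ((6:ℚ))^(k+d) ≠ 0 := by positivity
    have hq : (m:ℚ) * 6^(k+d) = m' * 6^k := (div_eq_div_iff h6 h6').mp h
    have hq2 : ((m:ℚ) * 6^d) * 6^k = m' * 6^k := by rw [← hq, pow_add]; ring
    have : (m:ℚ) * 6^d = m' := mul_right_cancel₀ h6 hq2
    exact_mod_cast this.symm
  rw [hint, mul_comm, zpow_mul, show ((6:ℤ)^d) = ((6^d : ℕ) : ℤ) by push_cast; ring,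
    zpow_natCast, bb_pow6d]

lemma bpow_eq {m m' : ℤ} {k k' : ℕ} (h : (m:ℚ)/6^k = (m':ℚ)/6^k') :
    bb k ^ m = bb k' ^ m' := by
  rcases le_total k k' with hk | hk
  · obtain ⟨d, rfl⟩ := Nat.exists_eq_add_of_le hk
    exact bpow_aux h
  · obtain ⟨d, rfl⟩ := Nat.exists_eq_add_of_le hk
    exact (bpow_aux h.symm).symm

lemma mem_Z16 {x : ℚ} : x ∈ Z16 ↔ ∃ (m : ℤ) (k : ℕ), x = m / 6 ^ k := Iff.rfl

noncomputable def den (q : Z16) : ℕ := (mem_Z16.mp q.2).choose_spec.choose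
noncomputable def num (q : Z16) : ℤ := (mem_Z16.mp q.2).choose

lemma q_spec (q : Z16) : (q : ℚ) = num q / 6 ^ den q :=
  (mem_Z16.mp q.2).choose_spec.choose_spec

noncomputable def fz (q : Z16) : G := bb (den q) ^ (num q)

lemma fz_eq (q : Z16) {m : ℤ} {k : ℕ} (h : (q:ℚ) = m / 6 ^ k) : fz q = bb k ^ m := by
  apply bpow_eq
  rw [← q_spec, h]

lemma fz_add (q q' : Z16) : fz (q + q') = fz q * fz q' := by
  obtain ⟨m, k, h⟩ := mem_Z16.mp q.2
  obtain ⟨m', k', h'⟩ := mem_Z16.mp q'.2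
  have hsum : ((q + q' : Z16) : ℚ) = ((m * 6 ^ k' + m' * 6 ^ k : ℤ) : ℚ) / 6 ^ (k + k') := by
    push_cast
    rw [h, h', pow_add]
    field_simp
  rw [fz_eq _ hsum, fz_eq q h, fz_eq q' h', zpow_add]
  congr 1
  · exact (bpow_eq (m := m) (m' := m * 6 ^ k') (by push_cast; rw [pow_add]; field_simp)).symm
  · exact (bpow_eq (m := m') (m' := m' * 6 ^ k) (by push_cast; rw [pow_add]; field_simp)).symm

lemma bb_conj9 (k : ℕ) : gt * bb k * gt⁻¹ = (bb (k+1)) ^ (9:ℤ) := by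
  rw [bb_conj]
  norm_cast

lemma fz_conj (q : Z16) : gt * fz q * gt⁻¹ = fz (mul32 q) := by
  obtain ⟨m, k, h⟩ := mem_Z16.mp q.2
  have h32 : ((mul32 q : Z16) : ℚ) = ((9 * m : ℤ) : ℚ) / 6 ^ (k+1) := by
    rw [mul32_coe, h, pow_succ]
    push_cast
    field_simp
    ring
  rw [fz_eq _ h32, fz_eq q h, zpow_mul, ← bb_conj9, conj_zpow]

lemma fz_conj' (q : Z16) : gt⁻¹ * fz q * gt = fz (mul32.symm q) := by
  have := fz_conj (mul32.symm q)
  rw [AddEquiv.apply_symm_apply] at this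
  rw [← this]
  group

end Q23NFP

namespace Q23NFP
open SemidirectProduct

noncomputable def f1 : Multiplicative Z16 →* G :=
  MonoidHom.mk' (fun x => fz x.toAdd) (fun a b => fz_add a.toAdd b.toAdd)

@[simp] lemma f1_apply (v : Z16) : f1 (ofAdd v) = fz v := rfl

lemma f1_compat : ∀ (g : Multiplicative ℤ) (x : Multiplicative Z16),
    f1 (phiQ g x) = gt ^ g.toAdd * f1 x * (gt ^ g.toAdd)⁻¹ := by
  have key : ∀ n : ℤ, ∀ x : Multiplicative Z16,
      f1 (phiQ (ofAdd n) x) = gt ^ n * f1 x * (gt ^ n)⁻¹ := by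
    have base : ∀ x : Multiplicative Z16,
        f1 (phiQ (ofAdd (1:ℤ)) x) = gt * f1 x * gt⁻¹ := by
      intro x
      rw [show x = ofAdd x.toAdd from rfl, phiQ_one_apply, f1_apply, f1_apply, fz_conj]
    have base' : ∀ x : Multiplicative Z16,
        f1 (phiQ (ofAdd (-1:ℤ)) x) = gt⁻¹ * f1 x * gt := by
      intro x
      have h : phiQ (ofAdd (-1:ℤ)) = (phiQ (ofAdd (1:ℤ)))⁻¹ := by
        rw [← map_inv]; rfl
      rw [h, show x = ofAdd x.toAdd from rfl, phiQ_inv_one_apply, f1_apply, f1_apply,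
        fz_conj']
    intro n
    induction n using Int.induction_on with
    | zero => intro x; simp [show phiQ (ofAdd (0:ℤ)) = 1 from map_one phiQ]
    | succ n ih =>
      intro x
      have hadd : (ofAdd ((n:ℤ)+1)) = ofAdd (1:ℤ) * ofAdd (n:ℤ) := by
        rw [← ofAdd_add]; ring_nf
      rw [hadd, map_mul, MulAut.mul_apply, base, ih, zpow_add, zpow_one]
      group
    | pred n ih =>
      intro x
      have hadd : (ofAdd (-(n:ℤ)-1)) = ofAdd (-1:ℤ) * ofAdd (-(n:ℤ)) := by
        rw [← ofAdd_add]; ring_nf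
      rw [hadd, map_mul, MulAut.mul_apply, base', ih, sub_eq_add_neg, zpow_add, zpow_neg_one]
      group
  intro g x
  exact key g.toAdd x

noncomputable def lam : Q23 →* G :=
  SemidirectProduct.lift f1 (zpowersHom G gt) (by
    intro g
    ext x
    simp only [MonoidHom.comp_apply, MulEquiv.coe_toMonoidHom, MulAut.conj_apply,
      zpowersHom_apply]
    exact f1_compat g x)

@[simp] lemma lam_inl (x : Multiplicative Z16) : lam (inl x) = f1 x := by
  simp [lam]

@[simp] lemma lam_inr (g : Multiplicative ℤ) : lam (inr g) = gt ^ g.toAdd := by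
  simp [lam, zpowersHom_apply]

noncomputable def pibar : G →* Q23 :=
  QuotientGroup.lift Kinf pi (by
    intro x hx
    have : Kinf ≤ pi.ker := Subgroup.normalClosure_le_normal Relinf_sub_ker
    exact this hx)

@[simp] lemma pibar_mk (w : F2) : pibar (gmk w) = pi w := rfl

lemma pibar_ga : pibar ga = Qa := by
  show pibar (gmk fa) = Qa; simp

lemma pibar_gt : pibar gt = Qt := by
  show pibar (gmk ft) = Qt; simp

def sp (k : ℕ) : Z16 := ⟨1 / 6 ^ k, 1, k, by push_cast; ring⟩

@[simp] lemma sp_coe (k : ℕ) : ((sp k : Z16) : ℚ) = 1 / 6 ^ k := rfl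

lemma sp_zero : sp 0 = e1 := by
  apply Subtype.ext; simp [e1]

lemma pibar_bb (k : ℕ) : pibar (bb k) = inl (ofAdd (sp k)) := by
  induction k with
  | zero =>
    rw [show bb 0 = ga from rfl, pibar_ga, sp_zero, Qa_def]
  | succ k ih =>
    have hbb : bb (k+1) = cj 1 (bb k) * cj (-1) (bb k) * ((bb k)⁻¹) ^ 2 := rfl
    have hc1 : pibar (cj 1 (bb k)) = Qt * pibar (bb k) * Qt⁻¹ := by
      unfold cj
      rw [map_mul, map_mul, zpow_one, map_inv, pibar_gt]
    have hc2 : pibar (cj (-1) (bb k)) = Qt⁻¹ * pibar (bb k) * Qt := by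
      unfold cj
      rw [map_mul, map_mul, map_inv, zpow_neg, zpow_one, map_inv, inv_inv, pibar_gt]
    rw [hbb, map_mul, map_mul, map_pow, map_inv, hc1, hc2, ih, Qt_conj, Qt_conj']
    rw [← map_inv, ← map_pow, ← map_mul, ← map_mul]
    congr 1
    rw [← ofAdd_neg, ← ofAdd_nsmul, ← ofAdd_add, ← ofAdd_add]
    congr 1
    apply Subtype.ext
    push_cast [mul32_coe, mul32_symm_coe, sp_coe]
    rw [pow_succ]
    field_simp
    ring_nf
    rw [← mul_pow, inv_mul_cancel₀ (by norm_num : (6:ℚ) ≠ 0), one_pow]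
    norm_num

end Q23NFP

namespace Q23NFP
open SemidirectProduct

lemma e1_coe' : ((e1 : Z16) : ℚ) = 1 := rfl

lemma lam_Qa : lam Qa = ga := by
  rw [Qa_def, lam_inl, f1_apply, fz_eq e1 (m := 1) (k := 0) (by rw [e1_coe']; norm_num)]
  rw [zpow_one]
  rfl

lemma lam_Qt : lam Qt = gt := by
  rw [Qt_def, lam_inr]
  simp

lemma lam_pibar_mk : (lam.comp pibar).comp gmk = gmk := by
  apply FreeGroup.ext_hom
  intro i
  fin_cases i
  · show lam (pibar (gmk fa)) = gmk fa
    rw [pibar_mk, pi_fa, lam_Qa]; rfl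
  · show lam (pibar (gmk ft)) = gmk ft
    rw [pibar_mk, pi_ft, lam_Qt]; rfl

lemma ker_pi_le_Kinf : pi.ker ≤ Kinf := by
  intro u hu
  have h1 : lam (pibar (gmk u)) = gmk u := by
    have := DFunLike.congr_fun lam_pibar_mk u
    simpa using this
  have h2 : pibar (gmk u) = 1 := by
    rw [pibar_mk]; exact hu
  rw [h2, map_one] at h1
  have : gmk u = 1 := h1.symm
  rwa [← QuotientGroup.ker_mk' Kinf]

lemma ker_pi_eq : pi.ker = Kinf := by
  apply le_antisymm ker_pi_le_Kinf
  apply Subgroup.normalClosure_le_normal Relinf_sub_ker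

lemma pibar_lam : pibar.comp lam = MonoidHom.id Q23 := by
  refine SemidirectProduct.hom_ext (MonoidHom.ext ?_) (MonoidHom.ext ?_)
  · intro v
    show pibar (lam (inl v)) = inl v
    rw [lam_inl]
    obtain ⟨m, k, h⟩ := mem_Z16.mp v.toAdd.2
    rw [show (v : Multiplicative Z16) = ofAdd v.toAdd from rfl, f1_apply, fz_eq _ h,
      map_zpow, pibar_bb, ← map_zpow, ← ofAdd_zsmul]
    congr 2
    apply Subtype.ext
    push_cast [sp_coe]
    rw [h]
    field_simp
    rw [zsmul_eq_mul]
    field_simp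
  · intro g
    show pibar (lam (inr g)) = inr g
    rw [lam_inr, map_zpow, pibar_gt]
    rw [show (g : Multiplicative ℤ) = ofAdd g.toAdd from rfl, Qt_def, ← map_zpow]
    congr 1
    rw [← ofAdd_zsmul]
    congr 1
    simp

lemma pi_surj : Function.Surjective pi := by
  intro q
  obtain ⟨w, hw⟩ := QuotientGroup.mk'_surjective Kinf (lam q)
  refine ⟨w, ?_⟩
  have : pibar (lam q) = q := DFunLike.congr_fun pibar_lam q
  rw [← this, ← hw]
  rfl

end Q23NFP

namespace Q23NFP

abbrev ΓZ : Type := Multiplicative ℤ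

def AH : Subgroup ΓZ := Subgroup.zpowers (ofAdd (2:ℤ))
def BH : Subgroup ΓZ := Subgroup.zpowers (ofAdd (3:ℤ))

lemma mem_AH {x : ΓZ} : x ∈ AH ↔ (2:ℤ) ∣ x.toAdd := by
  rw [AH, Subgroup.mem_zpowers_iff]
  constructor
  · rintro ⟨k, rfl⟩
    refine ⟨k, ?_⟩
    simp [toAdd_zpow, mul_comm]
  · rintro ⟨k, hk⟩
    refine ⟨k, ?_⟩
    have : x = ofAdd (2*k) := by
      rw [show x = ofAdd x.toAdd from rfl, hk]
    rw [this, ← ofAdd_zsmul]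
    congr 1
    simp [mul_comm]

lemma mem_BH {x : ΓZ} : x ∈ BH ↔ (3:ℤ) ∣ x.toAdd := by
  rw [BH, Subgroup.mem_zpowers_iff]
  constructor
  · rintro ⟨k, rfl⟩
    refine ⟨k, ?_⟩
    simp [toAdd_zpow, mul_comm]
  · rintro ⟨k, hk⟩
    refine ⟨k, ?_⟩
    have : x = ofAdd (3*k) := by
      rw [show x = ofAdd x.toAdd from rfl, hk]
    rw [this, ← ofAdd_zsmul]
    congr 1
    simp [mul_comm]

def phiH : AH ≃* BH where
  toFun a := ⟨ofAdd (3 * (toAdd (a : ΓZ) / 2)), mem_BH.mpr ⟨toAdd (a : ΓZ) / 2, rfl⟩⟩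
  invFun b := ⟨ofAdd (2 * (toAdd (b : ΓZ) / 3)), mem_AH.mpr ⟨toAdd (b : ΓZ) / 3, rfl⟩⟩
  left_inv a := by
    obtain ⟨k, hk⟩ := mem_AH.mp a.2
    apply Subtype.ext
    show ofAdd (2 * (toAdd (ofAdd (3 * (toAdd (a:ΓZ) / 2))) / 3)) = (a : ΓZ)
    rw [toAdd_ofAdd, hk, Int.mul_ediv_cancel_left _ (by norm_num),
      Int.mul_ediv_cancel_left _ (by norm_num), ← hk]
    rfl
  right_inv b := by
    obtain ⟨k, hk⟩ := mem_BH.mp b.2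
    apply Subtype.ext
    show ofAdd (3 * (toAdd (ofAdd (2 * (toAdd (b:ΓZ) / 3))) / 2)) = (b : ΓZ)
    rw [toAdd_ofAdd, hk, Int.mul_ediv_cancel_left _ (by norm_num),
      Int.mul_ediv_cancel_left _ (by norm_num), ← hk]
    rfl
  map_mul' a b := by
    obtain ⟨k, hk⟩ := mem_AH.mp a.2
    obtain ⟨l, hl⟩ := mem_AH.mp b.2
    apply Subtype.ext
    show ofAdd (3 * (toAdd ((a:ΓZ) * (b:ΓZ)) / 2)) = ofAdd (3 * (toAdd (a:ΓZ)/2)) * ofAdd (3 * (toAdd (b:ΓZ)/2))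
    rw [← ofAdd_add]
    congr 1
    rw [toAdd_mul, hk, hl]
    rw [← mul_add, Int.mul_ediv_cancel_left _ (by norm_num : (2:ℤ) ≠ 0),
      Int.mul_ediv_cancel_left _ (by norm_num : (2:ℤ) ≠ 0),
      Int.mul_ediv_cancel_left _ (by norm_num : (2:ℤ) ≠ 0)]
    ring

lemma phiH_apply (m : ℤ) (h : ofAdd (2*m) ∈ AH) :
    ((phiH ⟨ofAdd (2*m), h⟩ : BH) : ΓZ) = ofAdd (3*m) := by
  show ofAdd (3 * (toAdd (ofAdd (2*m)) / 2)) = ofAdd (3*m)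
  rw [toAdd_ofAdd, Int.mul_ediv_cancel_left _ (by norm_num : (2:ℤ) ≠ 0)]

abbrev HBS : Type := HNNExtension ΓZ AH BH phiH

lemma hnn_conj (m : ℤ) :
    HNNExtension.t * HNNExtension.of (ofAdd (2*m)) * HNNExtension.t⁻¹
      = (HNNExtension.of (ofAdd (3*m)) : HBS) := by
  have h : ofAdd (2*m) ∈ AH := mem_AH.mpr ⟨m, rfl⟩
  have := (HNNExtension.equiv_eq_conj (φ := phiH) ⟨ofAdd (2*m), h⟩).symm
  rwa [phiH_apply m h] at this

end Q23NFP

namespace Q23NFP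
open HNNExtension HNNExtension.NormalWord

noncomputable def psi (N : ℕ) : F2 →* HBS :=
  FreeGroup.lift (fun i => if i = 0 then HNNExtension.of (ofAdd ((2:ℤ)^N)) else HNNExtension.t)

@[simp] lemma psi_fa (N : ℕ) : psi N fa = HNNExtension.of (ofAdd ((2:ℤ)^N)) := by
  simp [psi, fa]

@[simp] lemma psi_ft (N : ℕ) : psi N ft = HNNExtension.t := by
  simp [psi, ft]

lemma of_zpow (m : ℤ) (j : ℤ) :
    (HNNExtension.of (ofAdd m) : HBS) ^ j = HNNExtension.of (ofAdd (j * m)) := by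
  rw [← map_zpow, ← ofAdd_zsmul]
  simp

lemma of_npow (m : ℤ) (j : ℕ) :
    (HNNExtension.of (ofAdd m) : HBS) ^ j = HNNExtension.of (ofAdd (j * m)) := by
  rw [← map_pow, ← ofAdd_nsmul]
  simp

lemma psi_conj_pow (N k : ℕ) (hk : k ≤ N) :
    HNNExtension.t ^ k * HNNExtension.of (ofAdd ((2:ℤ)^N)) * (HNNExtension.t ^ k)⁻¹
      = (HNNExtension.of (ofAdd ((2:ℤ)^(N-k) * 3^k)) : HBS) := by
  induction k with
  | zero =>
    simp only [pow_zero, one_mul, inv_one, mul_one, Nat.sub_zero]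
  | succ k ih =>
    have hk' : k ≤ N := by omega
    have e : (HNNExtension.t : HBS) ^ (k+1) * HNNExtension.of (ofAdd ((2:ℤ)^N)) * (HNNExtension.t ^ (k+1))⁻¹
        = HNNExtension.t * (HNNExtension.t ^ k * HNNExtension.of (ofAdd ((2:ℤ)^N)) * (HNNExtension.t ^ k)⁻¹) * HNNExtension.t⁻¹ := by
      rw [pow_succ']
      group
    rw [e, ih hk']
    have h2 : (2:ℤ)^(N-k) * 3^k = 2 * (2^(N-(k+1)) * 3^k) := by
      rw [show N - k = (N - (k+1)) + 1 by omega]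
      ring
    rw [h2, hnn_conj]
    congr 1
    rw [pow_succ]
    ring

lemma psi_r0 (N : ℕ) : psi N r0 = 1 := by
  rw [r0, map_mul, map_mul, map_mul, map_inv, map_inv, map_pow, map_pow, psi_fa, psi_ft]
  rw [mul_inv_eq_one, of_npow, of_npow]
  rw [show ((2:ℕ):ℤ) * 2^N = 2 * 2^N by norm_num, hnn_conj]
  norm_num

lemma psi_crel_le (N n : ℕ) (hn : 1 ≤ n) (hN : n ≤ N) : psi N (crel n) = 1 := by
  rw [crel, map_commutatorElement, map_mul, map_mul, map_inv, map_pow, psi_fa, psi_ft]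
  rw [psi_conj_pow N n hN]
  rw [commutatorElement_eq_one_iff_commute]
  exact (Commute.all _ _).map HNNExtension.of

lemma odd_not_mem_AH (m : ℤ) (hm : Odd m) : (ofAdd m : ΓZ) ∉ AH := by
  rw [mem_AH]
  intro h
  exact Int.not_even_iff_odd.mpr hm (even_iff_two_dvd.mpr h)

lemma not3_not_mem_BH (m : ℤ) (hm : ¬ (3:ℤ) ∣ m) : (ofAdd m : ΓZ) ∉ BH := by
  rw [mem_BH]
  simpa using hm

lemma psi_crel_ne (N : ℕ) : psi N (crel (N+1)) ≠ 1 := by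
  have hodd : Odd ((3:ℤ)^N) := Odd.pow (by decide)
  have hodd' : Odd (-(3:ℤ)^N) := hodd.neg
  have h3 : ¬ (3:ℤ) ∣ (-(2:ℤ)^N) := by
    rw [Int.dvd_neg]
    intro h
    have := Int.Prime.dvd_pow' (p := 3) (n := 2) (by norm_num) h
    norm_num at this
  -- the reduced word
  let w : ReducedWord ΓZ AH BH :=
    { head := ofAdd ((2:ℤ)^N)
      toList := [((1:ℤˣ), ofAdd ((3:ℤ)^N)), ((-1:ℤˣ), ofAdd (-(2:ℤ)^N)),
                 ((1:ℤˣ), ofAdd (-(3:ℤ)^N)), ((-1:ℤˣ), (1:ΓZ))]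
      chain := by
        refine List.isChain_cons_cons.mpr ⟨?_, List.isChain_cons_cons.mpr ⟨?_, List.isChain_cons_cons.mpr ⟨?_, List.isChain_singleton _⟩⟩⟩
        · intro h
          exact absurd (by exact h) (odd_not_mem_AH _ hodd)
        · intro h
          exact absurd (by exact h) (not3_not_mem_BH _ h3)
        · intro h
          exact absurd (by exact h) (odd_not_mem_AH _ hodd') }
  have hprod : w.prod phiH = psi N (crel (N+1)) := by
    show HNNExtension.of w.head * _ = _
    rw [crel, map_commutatorElement, map_mul, map_mul, map_inv, map_pow, psi_fa, psi_ft]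
    have hc : HNNExtension.t ^ (N+1) * HNNExtension.of (ofAdd ((2:ℤ)^N)) * (HNNExtension.t ^ (N+1))⁻¹
        = HNNExtension.t * (HNNExtension.of (ofAdd ((3:ℤ)^N)) : HBS) * HNNExtension.t⁻¹ := by
      have e : (HNNExtension.t : HBS) ^ (N+1) * HNNExtension.of (ofAdd ((2:ℤ)^N)) * (HNNExtension.t ^ (N+1))⁻¹
          = HNNExtension.t * (HNNExtension.t ^ N * HNNExtension.of (ofAdd ((2:ℤ)^N)) * (HNNExtension.t ^ N)⁻¹) * HNNExtension.t⁻¹ := by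
        rw [pow_succ']
        group
      rw [e, psi_conj_pow N N le_rfl]
      norm_num
    rw [hc]
    simp only [w, ReducedWord.prod, List.map_cons, List.map_nil, List.prod_cons, List.prod_nil]
    rw [show (((1:ℤˣ):ℤ)) = (1:ℤ) from rfl, show (((-1:ℤˣ):ℤ)) = (-1:ℤ) from rfl]
    rw [zpow_one, zpow_neg_one, map_one]
    rw [commutatorElement_def]
    have hofinv : ∀ m : ℤ, (HNNExtension.of (ofAdd (-m)) : HBS) = (HNNExtension.of (ofAdd m))⁻¹ := by
      intro m
      rw [← map_inv, ← ofAdd_neg]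
    rw [hofinv, hofinv]
    group
  intro hone
  have : w.prod phiH ∈ (HNNExtension.of.range : Subgroup HBS) := by
    rw [hprod, hone]
    exact one_mem _
  have hnil := ReducedWord.toList_eq_nil_of_mem_of_range phiH w this
  simp [w] at hnil

end Q23NFP

namespace Q23NFP

lemma map_normalClosure_le {M N : Type*} [Group M] [Group N] (f : M →* N)
    (s : Set M) {x : M} (hx : x ∈ Subgroup.normalClosure s) :
    f x ∈ Subgroup.normalClosure (f '' s) := by
  have h : Subgroup.normalClosure s ≤ (Subgroup.normalClosure (f '' s)).comap f := by
    apply Subgroup.normalClosure_le_normal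
    intro r hr
    exact Subgroup.subset_normalClosure ⟨r, hr, rfl⟩
  exact h hx

lemma KN_mono : Monotone KN := fun N M h => Subgroup.normalClosure_mono (Rel_mono h)

lemma KN_directed : Directed (· ≤ ·) KN := Monotone.directed_le KN_mono

lemma iSupKN_normal : (⨆ N, KN N).Normal := by
  constructor
  intro x hx g
  rw [Subgroup.mem_iSup_of_directed KN_directed] at hx ⊢
  obtain ⟨N, hN⟩ := hx
  exact ⟨N, Subgroup.Normal.conj_mem (Subgroup.normalClosure_normal) x hN g⟩

lemma Kinf_le_iSup : Kinf ≤ ⨆ N, KN N := by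
  have := iSupKN_normal
  apply Subgroup.normalClosure_le_normal
  rintro x (rfl | ⟨n, hn, rfl⟩)
  · exact Subgroup.mem_iSup_of_mem 0 (Subgroup.subset_normalClosure (Set.mem_union_left _ rfl))
  · exact Subgroup.mem_iSup_of_mem n
      (Subgroup.subset_normalClosure (Set.mem_union_right _ ⟨n, ⟨hn, le_rfl⟩, rfl⟩))

lemma KN_le_ker_psi (N : ℕ) : KN N ≤ (psi N).ker := by
  apply Subgroup.normalClosure_le_normal
  rintro x (rfl | ⟨n, ⟨hn1, hn2⟩, rfl⟩)
  · exact psi_r0 N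
  · exact psi_crel_le N n hn1 hn2

/-- `c_{N+1}` is not in the normal closure of the first `N` relators. -/
lemma crel_not_mem_KN (N : ℕ) : crel (N+1) ∉ KN N := by
  intro h
  exact psi_crel_ne N (KN_le_ker_psi N h)

lemma finite_subset_KN {S : Set F2} (hS : S.Finite) :
    S ⊆ ↑(⨆ N, KN N) → ∃ M, S ⊆ ↑(KN M) := by
  refine Set.Finite.induction_on S hS ?_ ?_
  · intro _
    exact ⟨0, by simp⟩
  · intro a s ha hs ih hsub
    obtain ⟨M, hM⟩ := ih (fun x hx => hsub (Set.mem_insert_of_mem a hx))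
    have hamem : a ∈ ⨆ N, KN N := hsub (Set.mem_insert a s)
    rw [Subgroup.mem_iSup_of_directed KN_directed] at hamem
    obtain ⟨Ma, hMa⟩ := hamem
    refine ⟨max Ma M, ?_⟩
    intro x hx
    rcases Set.mem_insert_iff.mp hx with rfl | hx
    · exact KN_mono (le_max_left _ _) hMa
    · exact KN_mono (le_max_right _ _) (hM hx)

end Q23NFP

namespace Q23NFP

/-- If `Q23` were finitely presented, `ker pi` would be the normal closure of a finite set. -/
lemma ker_pi_fin_normal_gen {n : ℕ} (rels : Set (FreeGroup (Fin n))) (hfin : rels.Finite)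
    (e : Q23 ≃* PresentedGroup rels) :
    ∃ S : Set F2, S.Finite ∧ pi.ker = Subgroup.normalClosure S := by
  classical
  set ψ : FreeGroup (Fin n) →* Q23 :=
    (e.symm : PresentedGroup rels ≃* Q23).toMonoidHom.comp (PresentedGroup.mk rels) with hψ
  have hψsurj : Function.Surjective ψ := by
    intro q
    obtain ⟨x, hx⟩ := PresentedGroup.mk_surjective rels (e q)
    exact ⟨x, by simp [hψ, hx]⟩
  have hker : ψ.ker = Subgroup.normalClosure rels := by
    ext x
    simp only [MonoidHom.mem_ker, hψ, MonoidHom.comp_apply, MulEquiv.coe_toMonoidHom]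
    rw [MulEquiv.map_eq_one_iff]
    exact QuotientGroup.eq_one_iff x
  -- choose preimages
  obtain ⟨va, hva⟩ := hψsurj Qa
  obtain ⟨vt, hvt⟩ := hψsurj Qt
  set θ : F2 →* FreeGroup (Fin n) :=
    FreeGroup.lift (fun i => if i = 0 then va else vt) with hθ
  have hθfa : θ fa = va := by simp [hθ, fa]
  have hθft : θ ft = vt := by simp [hθ, ft]
  have hcompθ : ψ.comp θ = pi := by
    apply FreeGroup.ext_hom
    intro i
    fin_cases i
    · show ψ (θ fa) = pi fa
      rw [hθfa, pi_fa, hva]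
    · show ψ (θ ft) = pi ft
      rw [hθft, pi_ft, hvt]
  set w : Fin n → F2 := fun i => Classical.choose (pi_surj (ψ (FreeGroup.of i))) with hw
  have hwspec : ∀ i, pi (w i) = ψ (FreeGroup.of i) :=
    fun i => Classical.choose_spec (pi_surj (ψ (FreeGroup.of i)))
  set σ : FreeGroup (Fin n) →* F2 := FreeGroup.lift w with hσ
  have hcompσ : pi.comp σ = ψ := by
    apply FreeGroup.ext_hom
    intro i
    show pi (σ (FreeGroup.of i)) = ψ (FreeGroup.of i)
    rw [hσ, FreeGroup.lift_apply_of, hwspec]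
  set S : Set F2 := (σ '' rels) ∪ {fa⁻¹ * σ (θ fa), ft⁻¹ * σ (θ ft)} with hS
  have hSfin : S.Finite := by
    rw [hS]
    exact (hfin.image σ).union ((Set.finite_singleton _).insert _)
  refine ⟨S, hSfin, ?_⟩
  apply le_antisymm
  · -- ker pi ≤ normalClosure S
    intro u hu
    have hθu : θ u ∈ Subgroup.normalClosure rels := by
      rw [← hker]
      show ψ (θ u) = 1
      rw [← MonoidHom.comp_apply, hcompθ]
      exact hu
    have hσθu : σ (θ u) ∈ Subgroup.normalClosure (σ '' rels) :=
      map_normalClosure_le σ rels hθu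
    have hσθu' : σ (θ u) ∈ Subgroup.normalClosure S :=
      Subgroup.normalClosure_mono (by rw [hS]; exact Set.subset_union_left) hσθu
    -- the two maps agree mod S
    set μ : F2 →* F2 ⧸ Subgroup.normalClosure S := QuotientGroup.mk' _ with hμ
    have hμeq : μ.comp (σ.comp θ) = μ := by
      apply FreeGroup.ext_hom
      intro i
      fin_cases i
      · show μ (σ (θ fa)) = μ fa
        have : fa⁻¹ * σ (θ fa) ∈ Subgroup.normalClosure S :=
          Subgroup.subset_normalClosure (by rw [hS]; right; left; rfl)
        have h1 : μ (fa⁻¹ * σ (θ fa)) = 1 := (QuotientGroup.eq_one_iff _).mpr this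
        rw [map_mul, map_inv] at h1
        exact (inv_mul_eq_one.mp h1).symm
      · show μ (σ (θ ft)) = μ ft
        have : ft⁻¹ * σ (θ ft) ∈ Subgroup.normalClosure S :=
          Subgroup.subset_normalClosure (by rw [hS]; right; right; rfl)
        have h1 : μ (ft⁻¹ * σ (θ ft)) = 1 := (QuotientGroup.eq_one_iff _).mpr this
        rw [map_mul, map_inv] at h1
        exact (inv_mul_eq_one.mp h1).symm
    have hμu : μ u = μ (σ (θ u)) := by
      have := DFunLike.congr_fun hμeq u
      simpa using this.symm
    have : μ (σ (θ u)) = 1 := (QuotientGroup.eq_one_iff _).mpr hσθu'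
    rw [this] at hμu
    exact (QuotientGroup.eq_one_iff _).mp hμu
  · -- normalClosure S ≤ ker pi
    apply Subgroup.normalClosure_le_normal
    rintro x (⟨r, hr, rfl⟩ | hx)
    · show pi (σ r) = 1
      rw [← MonoidHom.comp_apply, hcompσ]
      rw [← MonoidHom.mem_ker, hker]
      exact Subgroup.subset_normalClosure hr
    · rcases hx with rfl | rfl
      · show pi (fa⁻¹ * σ (θ fa)) = 1
        rw [map_mul, map_inv, ← MonoidHom.comp_apply, hcompσ, ← MonoidHom.comp_apply, hcompθ]
        simp
      · show pi (ft⁻¹ * σ (θ ft)) = 1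
        rw [map_mul, map_inv, ← MonoidHom.comp_apply, hcompσ, ← MonoidHom.comp_apply, hcompθ]
        simp

end Q23NFP

/-- **Proposition.** The group `Q(2,3)` is not finitely presented: it is not isomorphic to
any presented group on finitely many generators with finitely many relators. -/
theorem Q23_not_finitely_presented :
    ¬ ∃ (n : ℕ) (rels : Set (FreeGroup (Fin n))),
        rels.Finite ∧ Nonempty (Q23 ≃* PresentedGroup rels) := by
  rintro ⟨n, rels, hfin, ⟨e⟩⟩
  obtain ⟨S, hSfin, hker⟩ := Q23NFP.ker_pi_fin_normal_gen rels hfin e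
  have hsub : S ⊆ ↑(⨆ N, Q23NFP.KN N) := by
    intro s hs
    have hm : s ∈ Q23NFP.pi.ker := by
      rw [hker]
      exact Subgroup.subset_normalClosure hs
    exact Q23NFP.Kinf_le_iSup (Q23NFP.ker_pi_le_Kinf hm)
  obtain ⟨M, hM⟩ := Q23NFP.finite_subset_KN hSfin hsub
  have hc : Q23NFP.crel (M+1) ∈ Q23NFP.pi.ker := Q23NFP.pi_crel (M+1)
  have hmem : Q23NFP.crel (M+1) ∈ Q23NFP.KN M := by
    rw [hker] at hc
    exact (Subgroup.normalClosure_le_normal hM) hc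
  exact Q23NFP.crel_not_mem_KN M hmem
end

section
/- In the Baumslag–Solitar group BS(2,3) = ⟨a, t ∣ t a² t⁻¹ = a³⟩, the subgroup generated by a⁵ and t has index 5. -/
open Multiplicative

namespace BSaux

def pa : Equiv.Perm (ZMod 5) := ⟨(· + 1), (· - 1), by decide, by decide⟩
def pt : Equiv.Perm (ZMod 5) := ⟨(4 * ·), (4 * ·), by decide, by decide⟩

def φf : Fin 2 → Equiv.Perm (ZMod 5) := ![pa, pt]

lemma relh : ∀ r ∈ BSrels, FreeGroup.lift φf r = 1 := by
  rintro r hr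
  rw [BSrels, Set.mem_singleton_iff] at hr
  subst hr
  simp only [map_mul, map_pow, map_inv, FreeGroup.lift_apply_of]
  decide

def φ : BS23 →* Equiv.Perm (ZMod 5) := PresentedGroup.toGroup relh

lemma φa : φ BSa = pa := PresentedGroup.toGroup.of relh
lemma φt : φ BSt = pt := PresentedGroup.toGroup.of relh

lemma pa_zpow : ∀ (n : ℤ) (x : ZMod 5), (pa ^ n) x = x + n := by
  intro n
  induction n using Int.induction_on with
  | zero => intro x; simp
  | succ k ih => intro x
                 rw [zpow_add, Equiv.Perm.mul_apply, zpow_one]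
                 show (pa ^ (k:ℤ)) (x + 1) = _
                 rw [ih]; push_cast; ring
  | pred k ih => intro x
                 rw [sub_eq_add_neg, zpow_add, Equiv.Perm.mul_apply]
                 have h1 : (pa ^ (-1 : ℤ)) x = x - 1 := by rw [zpow_neg_one]; rfl
                 rw [h1, ih]; push_cast; ring

lemma rel0 : BSt * BSa ^ (2:ℕ) * BSt⁻¹ * (BSa ^ (3:ℕ))⁻¹ = 1 := by
  have h : PresentedGroup.mk BSrels (FreeGroup.of 1 * FreeGroup.of 0 ^ 2 *
      (FreeGroup.of 1)⁻¹ * (FreeGroup.of 0 ^ 3)⁻¹) = 1 :=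
    (QuotientGroup.eq_one_iff _).mpr (Subgroup.subset_normalClosure rfl)
  calc BSt * BSa ^ (2:ℕ) * BSt⁻¹ * (BSa ^ (3:ℕ))⁻¹
      = PresentedGroup.mk BSrels (FreeGroup.of 1 * FreeGroup.of 0 ^ 2 * (FreeGroup.of 1)⁻¹ *
        (FreeGroup.of 0 ^ 3)⁻¹) := by
        simp only [map_mul, map_pow, map_inv]; rfl
    _ = 1 := h

lemma rel1 : BSt * BSa ^ (2:ℤ) * BSt⁻¹ = BSa ^ (3:ℤ) := by
  have := rel0
  have h2 : BSt * BSa ^ (2:ℕ) * BSt⁻¹ = BSa ^ (3:ℕ) := by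
    rw [← mul_inv_eq_one]; exact this
  rw [show (2:ℤ) = ((2:ℕ):ℤ) from rfl, show (3:ℤ) = ((3:ℕ):ℤ) from rfl,
    zpow_natCast, zpow_natCast]
  exact h2

lemma conj2 (m : ℤ) : BSt * BSa ^ (2*m) * BSt⁻¹ = BSa ^ (3*m) := by
  have h : MulAut.conj BSt (BSa ^ (2:ℤ)) = BSa ^ (3:ℤ) := by
    simpa [MulAut.conj_apply, mul_assoc] using rel1
  calc BSt * BSa ^ (2*m) * BSt⁻¹
      = MulAut.conj BSt ((BSa ^ (2:ℤ)) ^ m) := by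
        rw [← zpow_mul, MulAut.conj_apply]
    _ = (MulAut.conj BSt (BSa ^ (2:ℤ))) ^ m := by rw [map_zpow]
    _ = (BSa ^ (3:ℤ)) ^ m := by rw [h]
    _ = BSa ^ (3*m) := by rw [← zpow_mul]

end BSaux

namespace BSaux

/-- The subgroup `⟨a⁵, t⟩`. -/
def Hs : Subgroup BS23 := Subgroup.closure {BSa ^ 5, BSt}

lemma hA5 : BSa ^ 5 ∈ Hs := Subgroup.subset_closure (Set.mem_insert _ _)
lemma hT : BSt ∈ Hs := Subgroup.subset_closure (Set.mem_insert_of_mem _ rfl)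

lemma hDvd : ∀ n : ℤ, (5:ℤ) ∣ n → BSa ^ n ∈ Hs := by
  rintro n ⟨k, rfl⟩
  rw [show (5:ℤ)*k = ((5:ℕ):ℤ)*k from rfl, zpow_mul, zpow_natCast]
  exact Subgroup.zpow_mem Hs hA5 k

/-- The covering predicate: `x` lies in `a⁻ⁱ H` for some `i`. -/
def Pp (x : BS23) : Prop := ∃ i : ℤ, BSa ^ i * x ∈ Hs

lemma stepA {x : BS23} : Pp x → Pp (BSa * x) := by
  rintro ⟨i, hi⟩
  exact ⟨i - 1, by rw [show BSa ^ (i-1) * (BSa * x) = BSa ^ i * x by group]; exact hi⟩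

lemma stepAinv {x : BS23} : Pp x → Pp (BSa⁻¹ * x) := by
  rintro ⟨i, hi⟩
  exact ⟨i + 1, by rw [show BSa ^ (i+1) * (BSa⁻¹ * x) = BSa ^ i * x by group]; exact hi⟩

lemma stepT {x : BS23} : Pp x → Pp (BSt * x) := by
  rintro ⟨i, hi⟩
  obtain ⟨m, d, hmd, hd⟩ : ∃ m d : ℤ, -i = 2*m + d ∧ (5:ℤ) ∣ d :=
    ⟨if (-i) % 2 = 0 then -i/2 else (-i+5)/2, if (-i) % 2 = 0 then 0 else -5, by
      constructor
      · split_ifs <;> omega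
      · split_ifs <;> omega⟩
  have e1 : BSt * BSa ^ (2*m) = BSa ^ (3*m) * BSt := by rw [← conj2 m]; group
  refine ⟨-(3*m), ?_⟩
  have hx : BSt * x = BSt * (BSa ^ (-i) * (BSa ^ i * x)) := by group
  rw [hx, hmd]
  have key : BSa ^ (-(3*m)) * (BSt * (BSa ^ (2*m+d) * (BSa ^ i * x)))
      = BSt * (BSa ^ d * (BSa ^ i * x)) := by
    calc BSa ^ (-(3*m)) * (BSt * (BSa ^ (2*m+d) * (BSa ^ i * x)))
        = BSa ^ (-(3*m)) * ((BSt * BSa ^ (2*m)) * (BSa ^ d * (BSa ^ i * x))) := by group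
      _ = BSa ^ (-(3*m)) * ((BSa ^ (3*m) * BSt) * (BSa ^ d * (BSa ^ i * x))) := by rw [e1]
      _ = BSt * (BSa ^ d * (BSa ^ i * x)) := by group
  rw [key]
  exact mul_mem hT (mul_mem (hDvd d hd) hi)

lemma stepTinv {x : BS23} : Pp x → Pp (BSt⁻¹ * x) := by
  rintro ⟨i, hi⟩
  obtain ⟨m, d, hmd, hd⟩ : ∃ m d : ℤ, -i = 3*m + d ∧ (5:ℤ) ∣ d :=
    ⟨if (-i) % 3 = 0 then -i/3 else if (-i) % 3 = 1 then (-i+5)/3 else (-i+10)/3,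
     if (-i) % 3 = 0 then 0 else if (-i) % 3 = 1 then -5 else -10, by
      constructor
      · split_ifs <;> omega
      · split_ifs <;> omega⟩
  have e2 : BSt⁻¹ * BSa ^ (3*m) = BSa ^ (2*m) * BSt⁻¹ := by rw [← conj2 m]; group
  refine ⟨-(2*m), ?_⟩
  have hx : BSt⁻¹ * x = BSt⁻¹ * (BSa ^ (-i) * (BSa ^ i * x)) := by group
  rw [hx, hmd]
  have key : BSa ^ (-(2*m)) * (BSt⁻¹ * (BSa ^ (3*m+d) * (BSa ^ i * x)))
      = BSt⁻¹ * (BSa ^ d * (BSa ^ i * x)) := by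
    calc BSa ^ (-(2*m)) * (BSt⁻¹ * (BSa ^ (3*m+d) * (BSa ^ i * x)))
        = BSa ^ (-(2*m)) * ((BSt⁻¹ * BSa ^ (3*m)) * (BSa ^ d * (BSa ^ i * x))) := by group
      _ = BSa ^ (-(2*m)) * ((BSa ^ (2*m) * BSt⁻¹) * (BSa ^ d * (BSa ^ i * x))) := by rw [e2]
      _ = BSt⁻¹ * (BSa ^ d * (BSa ^ i * x)) := by group
  rw [key]
  exact mul_mem (inv_mem hT) (mul_mem (hDvd d hd) hi)

/-- The elements preserving the covering predicate form a subgroup. -/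
def K : Subgroup BS23 where
  carrier := {g | ∀ x : BS23, Pp (g * x) ↔ Pp x}
  one_mem' := by intro x; rw [one_mul]
  mul_mem' := by
    intro g h hg hh x
    rw [mul_assoc]
    exact (hg _).trans (hh x)
  inv_mem' := by
    intro g hg x
    have := (hg (g⁻¹ * x)).symm
    rwa [show g * (g⁻¹ * x) = x by group] at this

lemma memA : BSa ∈ K := by
  intro x
  constructor
  · intro h
    have := stepAinv h
    rwa [show BSa⁻¹ * (BSa * x) = x by group] at this
  · exact stepA

lemma memT : BSt ∈ K := by
  intro x
  constructor
  · intro h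
    have := stepTinv h
    rwa [show BSt⁻¹ * (BSt * x) = x by group] at this
  · exact stepT

lemma main (g : BS23) : Pp g := by
  have hle : Subgroup.closure (Set.range (PresentedGroup.of : Fin 2 → BS23)) ≤ K := by
    rw [Subgroup.closure_le]
    rintro _ ⟨j, rfl⟩
    fin_cases j
    · exact memA
    · exact memT
  rw [PresentedGroup.closure_range_of] at hle
  have hgK : g ∈ K := hle (Subgroup.mem_top g)
  have h1 : Pp (1 : BS23) := ⟨0, by simpa using one_mem Hs⟩
  have := (hgK 1)
  rw [mul_one] at this
  exact this.mpr h1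

lemma hstab : ∀ h ∈ Hs, φ h 0 = 0 := by
  have hle : Hs ≤ (MulAction.stabilizer (Equiv.Perm (ZMod 5)) (0 : ZMod 5)).comap φ := by
    rw [Hs, Subgroup.closure_le]
    rintro g (rfl | rfl)
    · show φ (BSa ^ 5) • (0 : ZMod 5) = 0
      rw [map_pow, φa]
      decide
    · show φ BSt • (0 : ZMod 5) = 0
      rw [φt]
      decide
  intro h hh
  exact hle hh

end BSaux

namespace BSaux

lemma φ_zpow_zero (n : ℤ) : φ (BSa ^ n) 0 = (n : ZMod 5) := by
  rw [map_zpow, φa, pa_zpow]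
  simp

noncomputable def e : (BS23 ⧸ Hs) ≃ ZMod 5 where
  toFun := fun q => Quotient.liftOn' q (fun g => φ g 0) (by
    intro a b hab
    have h := hstab _ ((QuotientGroup.leftRel_apply).mp hab)
    have hb : b = a * (a⁻¹ * b) := by group
    show φ a 0 = φ b 0
    rw [hb, map_mul, Equiv.Perm.mul_apply, h])
  invFun := fun i => QuotientGroup.mk (BSa ^ ((i.val : ℤ)))
  left_inv := by
    intro q
    induction q using Quotient.inductionOn' with
    | h g =>
      obtain ⟨i, hi⟩ := main g
      show QuotientGroup.mk (BSa ^ (((φ g 0).val : ℤ))) = QuotientGroup.mk g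
      rw [QuotientGroup.eq]
      have hg : g = BSa ^ (-i) * (BSa ^ i * g) := by group
      have hv : φ g 0 = ((-i : ℤ) : ZMod 5) := by
        rw [hg, map_mul, Equiv.Perm.mul_apply, hstab _ hi, ← φ_zpow_zero]
      have hdvd : (5:ℤ) ∣ (-((φ g 0).val : ℤ) - i) := by
        have : ((-((φ g 0).val : ℤ) - i : ℤ) : ZMod 5) = 0 := by
          push_cast
          rw [ZMod.natCast_val, ZMod.cast_id, hv]
          push_cast
          ring
        exact (ZMod.intCast_zmod_eq_zero_iff_dvd _ 5).mp this
      have key : (BSa ^ (((φ g 0).val : ℤ)))⁻¹ * g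
          = BSa ^ (-((φ g 0).val : ℤ) - i) * (BSa ^ i * g) := by
        rw (occs := .pos [1]) [hg]
        group
      rw [key]
      exact mul_mem (hDvd _ hdvd) hi
  right_inv := by
    intro i
    show φ (BSa ^ ((i.val : ℤ))) 0 = i
    rw [φ_zpow_zero]
    push_cast
    rw [ZMod.natCast_val, ZMod.cast_id]

end BSaux

/-- **Lemma.** In `BS(2,3) = ⟨a, t ∣ t a² t⁻¹ = a³⟩`, the subgroup generated by `a⁵` and `t`
has index `5`. -/
theorem BS23_closure_index_five :
    (Subgroup.closure {BSa ^ 5, BSt} : Subgroup BS23).index = 5 := by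
  have h : (Subgroup.closure {BSa ^ 5, BSt} : Subgroup BS23).index
      = Nat.card (BS23 ⧸ BSaux.Hs) := rfl
  rw [h, Nat.card_congr BSaux.e, Nat.card_zmod]
end
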